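/- arXiv:2407.17200 — 4 statements merged into one kernel-verified Lean document; each statement's English description precedes it below -/
import Mathlib

section
/- Let d ≥ 1, let u : ℝ^d → ℝ be integrable and bounded with ‖u‖_∞ := sup_{v∈ℝ^d} |u(v)|, let σ > 0, and let Z be a standard Gaussian random vector in ℝ^d (law N(0, I_d)). Then the function G : ℝ^d → ℝ defined by G(w) := E[u(w + σ·Z)] is Lipschitz continuous with Lipschitz constant √d·‖u‖_∞/σ. -/
open MeasureTheory Metric Real

noncomputable section

/-- Density of the Gaussian measure `N(0, σ²·I_d)` on `ℝ^d`. -/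
def gaussDensity (d : ℕ) (σ : ℝ) (v : EuclideanSpace ℝ (Fin d)) : ℝ :=
  (2 * π * σ ^ 2) ^ (-(d : ℝ) / 2) * Real.exp (-‖v‖ ^ 2 / (2 * σ ^ 2))

/-- The Gaussian measure `N(0, σ²·I_d)` on `ℝ^d`. -/
def gaussMeasure (d : ℕ) (σ : ℝ) : Measure (EuclideanSpace ℝ (Fin d)) :=
  volume.withDensity fun v => ENNReal.ofReal (gaussDensity d σ v)


lemma exp_eq (x : ℝ) : Real.exp (-x ^ 2 / 2) = Real.exp (-(1/2 : ℝ) * x ^ 2) := by ring_nf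

lemma int1 : ∫ x : ℝ, Real.exp (-x ^ 2 / 2) = Real.sqrt (2 * π) := by
  simp_rw [exp_eq]
  rw [integral_gaussian, div_div_eq_mul_div, div_one]; ring_nf

lemma integrable1 : Integrable (fun x : ℝ => Real.exp (-x ^ 2 / 2)) := by
  simp_rw [exp_eq]; exact integrable_exp_neg_mul_sq (by norm_num)

lemma integrable2 : Integrable (fun x : ℝ => x ^ 2 * Real.exp (-x ^ 2 / 2)) := by
  simp_rw [exp_eq]
  have := integrable_rpow_mul_exp_neg_mul_sq (by norm_num : (0:ℝ) < 1/2) (s := 2) (by norm_num)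
  simpa [Real.rpow_two] using this

lemma int2 : ∫ x : ℝ, x ^ 2 * Real.exp (-x ^ 2 / 2) = Real.sqrt (2 * π) := by
  have hint : Integrable (fun x : ℝ => x * Real.exp (-x ^ 2 / 2)) := by
    simp_rw [exp_eq]; exact integrable_mul_exp_neg_mul_sq (by norm_num)
  have hderiv : ∀ x : ℝ, HasDerivAt (fun x : ℝ => x * Real.exp (-x ^ 2 / 2))
      (Real.exp (-x ^ 2 / 2) - x ^ 2 * Real.exp (-x ^ 2 / 2)) x := by
    intro x
    have h1 : HasDerivAt (fun x : ℝ => -x ^ 2 / 2) (-x) x := by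
      have := ((hasDerivAt_pow 2 x).neg).div_const 2
      exact this.congr_deriv (by push_cast; ring)
    have := (hasDerivAt_id x).mul h1.exp
    exact this.congr_deriv (by simp only [id]; ring)
  have h0 := integral_eq_zero_of_hasDerivAt_of_integrable hderiv
    (integrable1.sub integrable2) hint
  rw [integral_sub integrable1 integrable2] at h0
  rw [← int1]; linarith

-- multi-dimensional

lemma norm_sq_eq (d : ℕ) (z : EuclideanSpace ℝ (Fin d)) : ‖z‖ ^ 2 = ∑ i, z i ^ 2 := by
  rw [EuclideanSpace.norm_eq, Real.sq_sqrt (by positivity)]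
  simp [sq_abs]

lemma symm_apply (d : ℕ) (x : Fin d → ℝ) (i : Fin d) :
    (MeasurableEquiv.toLp 2 (Fin d → ℝ)).symm.symm x i = x i := rfl

lemma exp_prod (d : ℕ) (x : Fin d → ℝ) :
    Real.exp (-‖(MeasurableEquiv.toLp 2 (Fin d → ℝ)).symm.symm x‖ ^ 2 / 2)
      = ∏ i, Real.exp (-(x i) ^ 2 / 2) := by
  rw [norm_sq_eq, ← Real.exp_sum]
  congr 1
  simp_rw [symm_apply]
  rw [← Finset.sum_div, ← Finset.sum_neg_distrib]

lemma intE1 (d : ℕ) :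
    ∫ z : EuclideanSpace ℝ (Fin d), Real.exp (-‖z‖ ^ 2 / 2) = Real.sqrt (2 * π) ^ d := by
  rw [← ((EuclideanSpace.volume_preserving_symm_measurableEquiv_toLp (Fin d)).symm _).integral_comp']
  simp_rw [exp_prod]
  rw [MeasureTheory.volume_pi]
  rw [MeasureTheory.integral_fintype_prod_eq_pow (ι := Fin d) (fun x : ℝ => Real.exp (-x ^ 2 / 2)), int1]
  simp

lemma integrableE1 (d : ℕ) :
    Integrable (fun z : EuclideanSpace ℝ (Fin d) => Real.exp (-‖z‖ ^ 2 / 2)) := by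
  rw [← ((EuclideanSpace.volume_preserving_symm_measurableEquiv_toLp (Fin d)).symm).integrable_comp_emb
    (MeasurableEquiv.measurableEmbedding _)]
  have : ((fun z : EuclideanSpace ℝ (Fin d) => Real.exp (-‖z‖ ^ 2 / 2)) ∘
      (MeasurableEquiv.toLp 2 (Fin d → ℝ)).symm.symm)
      = fun x : Fin d → ℝ => ∏ i, Real.exp (-(x i) ^ 2 / 2) := by
    funext x; exact exp_prod d x
  rw [this]
  exact Integrable.fintype_prod (f := fun _ x => Real.exp (-x ^ 2 / 2)) (fun i => integrable1)

lemma intE2 (d : ℕ) :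
    ∫ z : EuclideanSpace ℝ (Fin d), ‖z‖ ^ 2 * Real.exp (-‖z‖ ^ 2 / 2)
      = d * Real.sqrt (2 * π) ^ d := by
  rw [← ((EuclideanSpace.volume_preserving_symm_measurableEquiv_toLp (Fin d)).symm _).integral_comp']
  have heq : ∀ x : Fin d → ℝ,
      ‖(MeasurableEquiv.toLp 2 (Fin d → ℝ)).symm.symm x‖ ^ 2
        * Real.exp (-‖(MeasurableEquiv.toLp 2 (Fin d → ℝ)).symm.symm x‖ ^ 2 / 2)
      = ∑ j, ∏ i, ((if i = j then (x i) ^ 2 else 1) * Real.exp (-(x i) ^ 2 / 2)) := by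
    intro x
    rw [exp_prod, norm_sq_eq]
    simp_rw [symm_apply, Finset.prod_mul_distrib, Finset.prod_ite_eq', Finset.mem_univ, if_true]
    rw [← Finset.sum_mul]
  simp_rw [heq]
  rw [integral_finset_sum]
  · have : ∀ j : Fin d, ∫ x : Fin d → ℝ, ∏ i, ((if i = j then (x i) ^ 2 else 1)
        * Real.exp (-(x i) ^ 2 / 2)) = Real.sqrt (2 * π) ^ d := by
      intro j
      rw [MeasureTheory.volume_pi]
      rw [MeasureTheory.integral_fintype_prod_eq_prod (ι := Fin d)
        (f := fun i x => (if i = j then x ^ 2 else 1) * Real.exp (-x ^ 2 / 2))]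
      have : ∀ i : Fin d, ∫ x : ℝ, (if i = j then x ^ 2 else 1) * Real.exp (-x ^ 2 / 2)
          = Real.sqrt (2 * π) := by
        intro i
        by_cases h : i = j
        · simp only [h, if_true]; exact int2
        · simp only [h, if_false, one_mul]; exact int1
      rw [Finset.prod_congr rfl (fun i _ => this i), Finset.prod_const]
      simp
    rw [Finset.sum_congr rfl (fun j _ => this j), Finset.sum_const]
    simp [mul_comm]
  · intro j _
    apply Integrable.fintype_prod (f := fun i x => (if i = j then x ^ 2 else 1)
      * Real.exp (-x ^ 2 / 2))
    intro i
    by_cases h : i = j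
    · simp only [h, if_true]; exact integrable2
    · simp only [h, if_false, one_mul]; exact integrable1

lemma integrableE2 (d : ℕ) :
    Integrable (fun z : EuclideanSpace ℝ (Fin d) => ‖z‖ ^ 2 * Real.exp (-‖z‖ ^ 2 / 2)) := by
  rw [← ((EuclideanSpace.volume_preserving_symm_measurableEquiv_toLp (Fin d)).symm).integrable_comp_emb
    (MeasurableEquiv.measurableEmbedding _)]
  have : ((fun z : EuclideanSpace ℝ (Fin d) => ‖z‖ ^ 2 * Real.exp (-‖z‖ ^ 2 / 2)) ∘
      (MeasurableEquiv.toLp 2 (Fin d → ℝ)).symm.symm)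
      = fun x : Fin d → ℝ => ∑ j, ∏ i, ((if i = j then (x i) ^ 2 else 1)
          * Real.exp (-(x i) ^ 2 / 2)) := by
    funext x
    show ‖(MeasurableEquiv.toLp 2 (Fin d → ℝ)).symm.symm x‖ ^ 2
        * Real.exp (-‖(MeasurableEquiv.toLp 2 (Fin d → ℝ)).symm.symm x‖ ^ 2 / 2) = _
    rw [exp_prod, norm_sq_eq]
    simp_rw [symm_apply, Finset.prod_mul_distrib, Finset.prod_ite_eq', Finset.mem_univ, if_true]
    rw [← Finset.sum_mul]
  rw [this]
  apply integrable_finset_sum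
  intro j _
  apply Integrable.fintype_prod (f := fun i x => (if i = j then x ^ 2 else 1)
    * Real.exp (-x ^ 2 / 2))
  intro i
  by_cases h : i = j
  · simp only [h, if_true]; exact integrable2
  · simp only [h, if_false, one_mul]; exact integrable1

lemma integrableE_norm (d : ℕ) :
    Integrable (fun z : EuclideanSpace ℝ (Fin d) => ‖z‖ * Real.exp (-‖z‖ ^ 2 / 2)) := by
  apply Integrable.mono' ((integrableE1 d).add (integrableE2 d))
  · apply Continuous.aestronglyMeasurable
    continuity
  · filter_upwards with z
    have h1 : (0:ℝ) < Real.exp (-‖z‖ ^ 2 / 2) := Real.exp_pos _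
    rw [Real.norm_eq_abs, abs_of_nonneg (by positivity)]
    simp only [Pi.add_apply]
    nlinarith [sq_nonneg (‖z‖ - 1), norm_nonneg z, mul_nonneg (norm_nonneg z) h1.le,
      mul_pos h1 h1]

lemma gd_eq (d : ℕ) (v : EuclideanSpace ℝ (Fin d)) :
    gaussDensity d 1 v = (2 * π) ^ (-(d : ℝ) / 2) * Real.exp (-‖v‖ ^ 2 / 2) := by
  simp [gaussDensity]

lemma c_pos (d : ℕ) : 0 < (2 * π) ^ (-(d : ℝ) / 2) :=
  Real.rpow_pos_of_pos (by positivity) _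

lemma gd_nonneg (d : ℕ) (v : EuclideanSpace ℝ (Fin d)) : 0 ≤ gaussDensity d 1 v := by
  rw [gd_eq]; positivity

lemma gd_cont (d : ℕ) : Continuous (gaussDensity d 1) := by
  have : gaussDensity d 1 = fun v : EuclideanSpace ℝ (Fin d) =>
      (2 * π) ^ (-(d : ℝ) / 2) * Real.exp (-‖v‖ ^ 2 / 2) := funext (gd_eq d)
  rw [this]; continuity

lemma gd_int (d : ℕ) : Integrable (gaussDensity d 1) := by
  have : gaussDensity d 1 = fun v : EuclideanSpace ℝ (Fin d) =>
      (2 * π) ^ (-(d : ℝ) / 2) * Real.exp (-‖v‖ ^ 2 / 2) := funext (gd_eq d)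
  rw [this]; exact (integrableE1 d).const_mul _

lemma c_norm (d : ℕ) : (2 * π) ^ (-(d : ℝ) / 2) * Real.sqrt (2 * π) ^ d = 1 := by
  have hπ : (0:ℝ) < 2 * π := by positivity
  rw [← Real.rpow_natCast (Real.sqrt (2 * π)) d, Real.sqrt_eq_rpow,
    ← Real.rpow_mul hπ.le, ← Real.rpow_add hπ]
  rw [show -(d:ℝ) / 2 + 1 / 2 * d = 0 by ring, Real.rpow_zero]

lemma gd_integral_one (d : ℕ) : ∫ z : EuclideanSpace ℝ (Fin d), gaussDensity d 1 z = 1 := by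
  simp_rw [gd_eq, integral_const_mul, intE1]
  exact c_norm d

lemma gd_integral_sq (d : ℕ) :
    ∫ z : EuclideanSpace ℝ (Fin d), ‖z‖ ^ 2 * gaussDensity d 1 z = d := by
  have : ∀ z : EuclideanSpace ℝ (Fin d), ‖z‖ ^ 2 * gaussDensity d 1 z
      = (2 * π) ^ (-(d : ℝ) / 2) * (‖z‖ ^ 2 * Real.exp (-‖z‖ ^ 2 / 2)) := by
    intro z; rw [gd_eq]; ring
  simp_rw [this, integral_const_mul, intE2]
  rw [← mul_assoc, mul_comm ((2 * π) ^ (-(d : ℝ) / 2)) (d : ℝ), mul_assoc, c_norm d, mul_one]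

lemma gd_int_sq (d : ℕ) :
    Integrable (fun z : EuclideanSpace ℝ (Fin d) => ‖z‖ ^ 2 * gaussDensity d 1 z) := by
  have : (fun z : EuclideanSpace ℝ (Fin d) => ‖z‖ ^ 2 * gaussDensity d 1 z)
      = fun z => (2 * π) ^ (-(d : ℝ) / 2) * (‖z‖ ^ 2 * Real.exp (-‖z‖ ^ 2 / 2)) := by
    funext z; rw [gd_eq]; ring
  rw [this]; exact (integrableE2 d).const_mul _

lemma gd_int_norm (d : ℕ) :
    Integrable (fun z : EuclideanSpace ℝ (Fin d) => ‖z‖ * gaussDensity d 1 z) := by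
  have : (fun z : EuclideanSpace ℝ (Fin d) => ‖z‖ * gaussDensity d 1 z)
      = fun z => (2 * π) ^ (-(d : ℝ) / 2) * (‖z‖ * Real.exp (-‖z‖ ^ 2 / 2)) := by
    funext z; rw [gd_eq]; ring
  rw [this]; exact (integrableE_norm d).const_mul _

lemma gd_integral_norm_le (d : ℕ) (hd : 1 ≤ d) :
    ∫ z : EuclideanSpace ℝ (Fin d), ‖z‖ * gaussDensity d 1 z ≤ Real.sqrt d := by
  have hd0 : (0:ℝ) < Real.sqrt d := Real.sqrt_pos.2 (by exact_mod_cast Nat.lt_of_lt_of_le Nat.zero_lt_one hd)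
  have hsq : Real.sqrt d * Real.sqrt d = d := Real.mul_self_sqrt (by positivity)
  have hpt : ∀ z : EuclideanSpace ℝ (Fin d), ‖z‖ * gaussDensity d 1 z
      ≤ (Real.sqrt d / 2) * gaussDensity d 1 z
        + (1 / (2 * Real.sqrt d)) * (‖z‖ ^ 2 * gaussDensity d 1 z) := by
    intro z
    have h1 : ‖z‖ ≤ Real.sqrt d / 2 + ‖z‖ ^ 2 / (2 * Real.sqrt d) := by
      rw [div_add_div _ _ (by norm_num : (2:ℝ) ≠ 0) (by positivity : 2 * Real.sqrt d ≠ 0),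
        le_div_iff₀ (by positivity)]
      nlinarith [sq_nonneg (Real.sqrt d - ‖z‖), hsq]
    have h2 := mul_le_mul_of_nonneg_right h1 (gd_nonneg d z)
    calc ‖z‖ * gaussDensity d 1 z
        ≤ (Real.sqrt d / 2 + ‖z‖ ^ 2 / (2 * Real.sqrt d)) * gaussDensity d 1 z := h2
      _ = (Real.sqrt d / 2) * gaussDensity d 1 z
          + (1 / (2 * Real.sqrt d)) * (‖z‖ ^ 2 * gaussDensity d 1 z) := by ring
  calc ∫ z : EuclideanSpace ℝ (Fin d), ‖z‖ * gaussDensity d 1 z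
      ≤ ∫ z : EuclideanSpace ℝ (Fin d), ((Real.sqrt d / 2) * gaussDensity d 1 z
          + (1 / (2 * Real.sqrt d)) * (‖z‖ ^ 2 * gaussDensity d 1 z)) := by
        apply integral_mono (gd_int_norm d)
          (((gd_int d).const_mul _).add ((gd_int_sq d).const_mul _)) hpt
    _ = (Real.sqrt d / 2) * (∫ z : EuclideanSpace ℝ (Fin d), gaussDensity d 1 z)
          + (1 / (2 * Real.sqrt d)) * ∫ z : EuclideanSpace ℝ (Fin d), ‖z‖ ^ 2 * gaussDensity d 1 z := by
        rw [integral_add ((gd_int d).const_mul _) ((gd_int_sq d).const_mul _),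
          integral_const_mul, integral_const_mul]
    _ = Real.sqrt d := by
        rw [gd_integral_one, gd_integral_sq]
        field_simp
        nlinarith [hsq]

lemma gd_deriv (d : ℕ) (a z : EuclideanSpace ℝ (Fin d)) (t : ℝ) :
    HasDerivAt (fun s : ℝ => gaussDensity d 1 (z + s • a))
      (-(inner ℝ (z + t • a) a : ℝ) * gaussDensity d 1 (z + t • a)) t := by
  have hg : HasDerivAt (fun s : ℝ => z + s • a) a t := by
    simpa using ((hasDerivAt_id t).smul_const a).const_add z
  have hi : HasDerivAt (fun s : ℝ => (inner ℝ (z + s • a) (z + s • a) : ℝ))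
      ((inner ℝ (z + t • a) a : ℝ) + (inner ℝ a (z + t • a) : ℝ)) t := hg.inner ℝ hg
  have h2 := (((hi.neg).div_const 2).exp.const_mul ((2 * π) ^ (-(d : ℝ) / 2)))
  have heq : (fun s : ℝ => (2 * π) ^ (-(d : ℝ) / 2)
      * Real.exp (-(inner ℝ (z + s • a) (z + s • a) : ℝ) / 2))
      = fun s : ℝ => gaussDensity d 1 (z + s • a) := by
    funext s
    rw [gd_eq, real_inner_self_eq_norm_sq]
  simp only [Pi.neg_apply] at h2
  rw [heq] at h2
  refine h2.congr_deriv ?_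
  rw [gd_eq, real_inner_self_eq_norm_sq, real_inner_comm a (z + t • a)]
  ring

lemma gd_cont_aux (d : ℕ) (a z : EuclideanSpace ℝ (Fin d)) :
    Continuous (fun t : ℝ => -(inner ℝ (z + t • a) a : ℝ) * gaussDensity d 1 (z + t • a)) := by
  have hc : Continuous (fun t : ℝ => z + t • a) := by continuity
  exact ((hc.inner continuous_const).neg).mul ((gd_cont d).comp hc)

lemma gd_ftc (d : ℕ) (a z : EuclideanSpace ℝ (Fin d)) :
    gaussDensity d 1 (z + a) - gaussDensity d 1 z
      = ∫ t in (0:ℝ)..1, -(inner ℝ (z + t • a) a : ℝ) * gaussDensity d 1 (z + t • a) := by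
  have := intervalIntegral.integral_eq_sub_of_hasDerivAt
    (f := fun s : ℝ => gaussDensity d 1 (z + s • a))
    (fun t _ => gd_deriv d a z t) ((gd_cont_aux d a z).intervalIntegrable 0 1)
  rw [this]
  simp

lemma gd_pointwise (d : ℕ) (a z : EuclideanSpace ℝ (Fin d)) :
    |gaussDensity d 1 (z + a) - gaussDensity d 1 z|
      ≤ ∫ t in (0:ℝ)..1, ‖a‖ * (‖z + t • a‖ * gaussDensity d 1 (z + t • a)) := by
  rw [gd_ftc]
  refine le_trans (intervalIntegral.abs_integral_le_integral_abs zero_le_one) ?_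
  apply intervalIntegral.integral_mono_on zero_le_one
  · exact ((gd_cont_aux d a z).abs).intervalIntegrable 0 1
  · have hc : Continuous (fun t : ℝ => z + t • a) := by continuity
    exact (continuous_const.mul ((hc.norm).mul ((gd_cont d).comp hc))).intervalIntegrable 0 1
  · intro t _
    rw [abs_mul, abs_neg, abs_of_nonneg (gd_nonneg d _)]
    have h1 := abs_real_inner_le_norm (z + t • a) a
    have h2 := gd_nonneg d (z + t • a)
    nlinarith [mul_le_mul_of_nonneg_right h1 h2]

lemma tv_bound (d : ℕ) (hd : 1 ≤ d) (a : EuclideanSpace ℝ (Fin d)) :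
    ∫ z : EuclideanSpace ℝ (Fin d), |gaussDensity d 1 (z + a) - gaussDensity d 1 z|
      ≤ Real.sqrt d * ‖a‖ := by
  have hψ_cont : Continuous (fun z : EuclideanSpace ℝ (Fin d) => ‖z‖ * gaussDensity d 1 z) :=
    continuous_norm.mul (gd_cont d)
  have hψ_nonneg : ∀ z : EuclideanSpace ℝ (Fin d), 0 ≤ ‖z‖ * gaussDensity d 1 z :=
    fun z => mul_nonneg (norm_nonneg z) (gd_nonneg d z)
  set J : ℝ := ∫ z : EuclideanSpace ℝ (Fin d), ‖z‖ * gaussDensity d 1 z with hJ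
  have hJ_nonneg : 0 ≤ J := integral_nonneg hψ_nonneg
  have hg_int : Integrable
      (fun z : EuclideanSpace ℝ (Fin d) => |gaussDensity d 1 (z + a) - gaussDensity d 1 z|) :=
    (((gd_int d).comp_add_right a).sub (gd_int d)).abs
  -- the main lintegral computation
  have key : ∫ z : EuclideanSpace ℝ (Fin d), |gaussDensity d 1 (z + a) - gaussDensity d 1 z|
      ≤ ‖a‖ * J := by
    rw [integral_eq_lintegral_of_nonneg_ae (Filter.Eventually.of_forall fun z => abs_nonneg _)
      hg_int.1]
    have h1 : (∫⁻ z : EuclideanSpace ℝ (Fin d),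
        ENNReal.ofReal |gaussDensity d 1 (z + a) - gaussDensity d 1 z|)
        ≤ ENNReal.ofReal (‖a‖ * J) := by
      have hstep1 : ∀ z : EuclideanSpace ℝ (Fin d),
          ENNReal.ofReal |gaussDensity d 1 (z + a) - gaussDensity d 1 z|
          ≤ ENNReal.ofReal ‖a‖ * ∫⁻ t in Set.Ioc (0:ℝ) 1,
              ENNReal.ofReal (‖z + t • a‖ * gaussDensity d 1 (z + t • a)) := by
        intro z
        refine le_trans (ENNReal.ofReal_le_ofReal (gd_pointwise d a z)) ?_
        rw [intervalIntegral.integral_of_le zero_le_one]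
        have hcont : Continuous (fun t : ℝ => ‖a‖ * (‖z + t • a‖ * gaussDensity d 1 (z + t • a))) := by
          have hc : Continuous (fun t : ℝ => z + t • a) := by continuity
          exact continuous_const.mul ((hc.norm).mul ((gd_cont d).comp hc))
        rw [ofReal_integral_eq_lintegral_ofReal (hcont.integrableOn_Ioc)
          (Filter.Eventually.of_forall fun t =>
            mul_nonneg (norm_nonneg a) (hψ_nonneg (z + t • a)))]
        rw [← lintegral_const_mul' _ _ ENNReal.ofReal_ne_top]
        apply lintegral_mono
        intro t
        exact le_of_eq (ENNReal.ofReal_mul (norm_nonneg a))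
      calc (∫⁻ z : EuclideanSpace ℝ (Fin d),
            ENNReal.ofReal |gaussDensity d 1 (z + a) - gaussDensity d 1 z|)
          ≤ ∫⁻ z : EuclideanSpace ℝ (Fin d), ENNReal.ofReal ‖a‖ * ∫⁻ t in Set.Ioc (0:ℝ) 1,
              ENNReal.ofReal (‖z + t • a‖ * gaussDensity d 1 (z + t • a)) :=
            lintegral_mono hstep1
        _ = ENNReal.ofReal ‖a‖ * ∫⁻ z : EuclideanSpace ℝ (Fin d), ∫⁻ t in Set.Ioc (0:ℝ) 1,
              ENNReal.ofReal (‖z + t • a‖ * gaussDensity d 1 (z + t • a)) :=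
            lintegral_const_mul' _ _ ENNReal.ofReal_ne_top
        _ = ENNReal.ofReal ‖a‖ * ∫⁻ t in Set.Ioc (0:ℝ) 1, ∫⁻ z : EuclideanSpace ℝ (Fin d),
              ENNReal.ofReal (‖z + t • a‖ * gaussDensity d 1 (z + t • a)) := by
            congr 1
            apply lintegral_lintegral_swap
            apply Measurable.aemeasurable
            apply Measurable.ennreal_ofReal
            have hc : Continuous (fun p : EuclideanSpace ℝ (Fin d) × ℝ => p.1 + p.2 • a) := by
              fun_prop
            exact ((hc.norm).mul ((gd_cont d).comp hc)).measurable
        _ = ENNReal.ofReal ‖a‖ * ∫⁻ t in Set.Ioc (0:ℝ) 1, ENNReal.ofReal J := by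
            congr 1
            apply lintegral_congr
            intro t
            rw [lintegral_add_right_eq_self (fun z : EuclideanSpace ℝ (Fin d) =>
              ENNReal.ofReal (‖z‖ * gaussDensity d 1 z)) (t • a)]
            exact (ofReal_integral_eq_lintegral_ofReal (gd_int_norm d)
              (Filter.Eventually.of_forall hψ_nonneg)).symm
        _ = ENNReal.ofReal ‖a‖ * ENNReal.ofReal J := by
            rw [setLIntegral_const, Real.volume_Ioc]
            norm_num
        _ = ENNReal.ofReal (‖a‖ * J) := (ENNReal.ofReal_mul (norm_nonneg a)).symm
    calc (∫⁻ z : EuclideanSpace ℝ (Fin d),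
          ENNReal.ofReal |gaussDensity d 1 (z + a) - gaussDensity d 1 z|).toReal
        ≤ (ENNReal.ofReal (‖a‖ * J)).toReal := ENNReal.toReal_mono ENNReal.ofReal_ne_top h1
      _ = ‖a‖ * J := ENNReal.toReal_ofReal (by positivity)
  refine le_trans key ?_
  rw [mul_comm (Real.sqrt d) ‖a‖]
  exact mul_le_mul_of_nonneg_left (gd_integral_norm_le d hd) (norm_nonneg a)

/-- If `u : ℝ^d → ℝ` is integrable and bounded and `Z` is a standard Gaussian vector in
`ℝ^d`, then `G(w) := E[u(w + σ·Z)]` is `√d·‖u‖_∞/σ`-Lipschitz. -/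
theorem statement0 (d : ℕ) (hd : 1 ≤ d) (σ : ℝ) (hσ : 0 < σ)
    (u : EuclideanSpace ℝ (Fin d) → ℝ)
    (hu_int : Integrable u (volume : Measure (EuclideanSpace ℝ (Fin d))))
    (hu_bdd : BddAbove (Set.range fun v => |u v|))
    (G : EuclideanSpace ℝ (Fin d) → ℝ)
    (hG : ∀ w, G w = ∫ z, u (w + σ • z) ∂(gaussMeasure d 1)) :
    ∀ w w', |G w - G w'| ≤ Real.sqrt d * (⨆ v, |u v|) / σ * ‖w - w'‖ := by
  intro w w'
  have hE : (gaussMeasure d 1) = (volume : Measure (EuclideanSpace ℝ (Fin d))).withDensity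
      (fun v => ((gaussDensity d 1 v).toNNReal : ENNReal)) := rfl
  set M : ℝ := ⨆ v, |u v| with hM
  have hM_bound : ∀ x, |u x| ≤ M := fun x => le_ciSup hu_bdd x
  have hM_nonneg : 0 ≤ M := le_trans (abs_nonneg _) (hM_bound 0)
  have hu_meas : AEStronglyMeasurable u volume := hu_int.1
  have hcomp : ∀ v : EuclideanSpace ℝ (Fin d),
      AEStronglyMeasurable (fun z => u (v + σ • z)) volume := by
    intro v
    have hs : Measure.QuasiMeasurePreserving (fun z : EuclideanSpace ℝ (Fin d) => σ • z)
        volume volume := Measure.quasiMeasurePreserving_smul volume hσ.ne'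
    have ht : MeasurePreserving (fun z : EuclideanSpace ℝ (Fin d) => v + z) volume volume :=
      measurePreserving_add_left volume v
    exact hu_meas.comp_quasiMeasurePreserving (ht.quasiMeasurePreserving.comp hs)
  have hGeq : ∀ v, G v = ∫ z, gaussDensity d 1 z * u (v + σ • z) := by
    intro v
    rw [hG v, hE, integral_withDensity_eq_integral_smul
      ((gd_cont d).measurable.real_toNNReal) _]
    congr 1
    funext z
    rw [NNReal.smul_def, Real.coe_toNNReal _ (gd_nonneg d z), smul_eq_mul]
  have hInt : ∀ (v b : EuclideanSpace ℝ (Fin d)),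
      Integrable (fun z => gaussDensity d 1 (z + b) * u (v + σ • z)) := by
    intro v b
    apply Integrable.mono' (((gd_int d).comp_add_right b).const_mul M)
    · exact (((gd_cont d).comp (continuous_id.add continuous_const)).aestronglyMeasurable).mul
        (hcomp v)
    · filter_upwards with z
      rw [Real.norm_eq_abs, abs_mul, abs_of_nonneg (gd_nonneg d _)]
      calc gaussDensity d 1 (z + b) * |u (v + σ • z)|
          ≤ gaussDensity d 1 (z + b) * M :=
            mul_le_mul_of_nonneg_left (hM_bound _) (gd_nonneg d _)
        _ = M * gaussDensity d 1 (z + b) := mul_comm _ _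
  have hInt0 : ∀ v : EuclideanSpace ℝ (Fin d),
      Integrable (fun z => gaussDensity d 1 z * u (v + σ • z)) := by
    intro v; simpa using hInt v 0
  set a : EuclideanSpace ℝ (Fin d) := σ⁻¹ • (w' - w) with ha
  have hσa : σ • a = w' - w := smul_inv_smul₀ hσ.ne' _
  have hshift : G w = ∫ z, gaussDensity d 1 (z + a) * u (w' + σ • z) := by
    rw [hGeq w]
    rw [← integral_add_right_eq_self (μ := volume)
      (fun z => gaussDensity d 1 z * u (w + σ • z)) a]
    congr 1
    funext z
    have : w + σ • (z + a) = w' + σ • z := by rw [smul_add, hσa]; abel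
    simp only [this]
  have hdiff : G w - G w'
      = ∫ z, (gaussDensity d 1 (z + a) - gaussDensity d 1 z) * u (w' + σ • z) := by
    rw [hshift, hGeq w', ← integral_sub (hInt w' a) (hInt0 w')]
    congr 1
    funext z
    ring
  have hnorma : ‖a‖ = ‖w - w'‖ / σ := by
    rw [ha, norm_smul, norm_inv, Real.norm_eq_abs, abs_of_pos hσ, norm_sub_rev]
    ring
  have hstep : |G w - G w'| ≤ (∫ z, |gaussDensity d 1 (z + a) - gaussDensity d 1 z|) * M := by
    rw [hdiff, ← integral_mul_const]
    rw [← Real.norm_eq_abs]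
    apply norm_integral_le_of_norm_le
      (((((gd_int d).comp_add_right a).sub (gd_int d)).abs).mul_const M)
    filter_upwards with z
    rw [Real.norm_eq_abs, abs_mul]
    exact mul_le_mul_of_nonneg_left (hM_bound _) (abs_nonneg _)
  refine le_trans hstep ?_
  have h2 := mul_le_mul_of_nonneg_right (tv_bound d hd a) hM_nonneg
  refine le_trans h2 ?_
  rw [hnorma]
  apply le_of_eq
  field_simp
end
end

section
/- Let d ≥ 1, σ > 0, and let h_σ : ℝ^d → ℝ be the density of the Gaussian measure N(0, σ²·I_d) on ℝ^d. Then for all θ, θ' ∈ ℝ^d, ∫_{ℝ^d} |h_σ(v − θ) − h_σ(v − θ')| dv ≤ (√d/σ)·‖θ − θ'‖₂. -/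
open MeasureTheory Metric Real

open Filter Asymptotics Topology

lemma tendsto_mul_exp_top {b : ℝ} (hb : 0 < b) :
    Tendsto (fun x : ℝ => x * exp (-b * x ^ 2)) atTop (𝓝 0) := by
  have h := rpow_mul_exp_neg_mul_sq_isLittleO_exp_neg hb 1
  simp_rw [rpow_one] at h
  exact h.isBigO.trans_tendsto (tendsto_exp_atBot.comp
    (tendsto_id.const_mul_atTop_of_neg (by norm_num : (-(1/2) : ℝ) < 0)))

lemma tendsto_mul_exp_bot {b : ℝ} (hb : 0 < b) :
    Tendsto (fun x : ℝ => x * exp (-b * x ^ 2)) atBot (𝓝 0) := by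
  have h := (tendsto_mul_exp_top hb).comp tendsto_neg_atBot_atTop
  have : (fun x : ℝ => x * exp (-b * x ^ 2)) = fun x => -((-x) * exp (-b * (-x) ^ 2)) := by
    funext x; ring_nf
  rw [this]
  simpa using h.neg

lemma integrable_sq_mul_exp {b : ℝ} (hb : 0 < b) :
    Integrable fun x : ℝ => x ^ 2 * exp (-b * x ^ 2) := by
  have := integrable_rpow_mul_exp_neg_mul_sq hb (s := 2) (by norm_num)
  simpa [rpow_two] using this

lemma integral_sq_mul_exp {b : ℝ} (hb : 0 < b) :
    ∫ x : ℝ, x ^ 2 * exp (-b * x ^ 2) = (2 * b)⁻¹ * Real.sqrt (π / b) := by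
  have hderiv : ∀ x : ℝ, HasDerivAt (fun x : ℝ => -(2 * b)⁻¹ * (x * exp (-b * x ^ 2)))
      (x ^ 2 * exp (-b * x ^ 2) - (2 * b)⁻¹ * exp (-b * x ^ 2)) x := by
    intro x
    have h1 : HasDerivAt (fun x : ℝ => -b * x ^ 2) (-b * (2 * x)) x := by
      simpa using ((hasDerivAt_pow 2 x).const_mul (-b))
    have h2 : HasDerivAt (fun x : ℝ => x * exp (-b * x ^ 2))
        (1 * exp (-b * x ^ 2) + x * (exp (-b * x ^ 2) * (-b * (2 * x)))) x :=
      (hasDerivAt_id x).mul h1.exp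
    have := h2.const_mul (-(2 * b)⁻¹)
    refine this.congr_deriv ?_
    field_simp [hb.ne']
    ring
  have hint : Integrable fun x : ℝ =>
      x ^ 2 * exp (-b * x ^ 2) - (2 * b)⁻¹ * exp (-b * x ^ 2) :=
    (integrable_sq_mul_exp hb).sub ((integrable_exp_neg_mul_sq hb).const_mul _)
  have h0 := integral_of_hasDerivAt_of_tendsto hderiv hint
    (by simpa using (tendsto_mul_exp_bot hb).const_mul (-(2 * b)⁻¹))
    (by simpa using (tendsto_mul_exp_top hb).const_mul (-(2 * b)⁻¹))
  rw [integral_sub (integrable_sq_mul_exp hb) ((integrable_exp_neg_mul_sq hb).const_mul _),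
    MeasureTheory.integral_const_mul, integral_gaussian] at h0
  linarith [h0]

lemma integrableE_exp {d : ℕ} {b : ℝ} (hb : 0 < b) :
    Integrable (fun v : EuclideanSpace ℝ (Fin d) => exp (-b * ‖v‖ ^ 2)) := by
  have h := (GaussianFourier.integrable_cexp_neg_mul_sq_norm_add_of_euclideanSpace
    (b := (b : ℂ)) (by simpa using hb) 0 (0 : EuclideanSpace ℝ (Fin d))).norm
  convert h using 2 with v
  simp [Complex.norm_exp]
  norm_cast
  exact Or.inl rfl

lemma integralE_exp {d : ℕ} {b : ℝ} (hb : 0 < b) :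
    ∫ v : EuclideanSpace ℝ (Fin d), exp (-b * ‖v‖ ^ 2) = Real.sqrt (π / b) ^ d := by
  rw [GaussianFourier.integral_rexp_neg_mul_sq_norm hb, finrank_euclideanSpace_fin]
  rw [Real.sqrt_eq_rpow, ← Real.rpow_natCast ((π / b) ^ (1/2 : ℝ)) d,
    ← Real.rpow_mul (by positivity)]
  norm_num
  ring_nf

lemma integralE_sq {d : ℕ} {b : ℝ} (hb : 0 < b) (hd : 1 ≤ d) :
    ∫ v : EuclideanSpace ℝ (Fin d), ‖v‖ ^ 2 * exp (-b * ‖v‖ ^ 2)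
      = d * (2 * b)⁻¹ * Real.sqrt (π / b) ^ d := by
  have hmp := (EuclideanSpace.volume_preserving_symm_measurableEquiv_toLp (Fin d)).symm
  rw [← hmp.integral_comp']
  have hnorm : ∀ x : Fin d → ℝ,
      ‖(MeasurableEquiv.toLp 2 (Fin d → ℝ)).symm.symm x‖ ^ 2 = ∑ i, x i ^ 2 := by
    intro x
    rw [EuclideanSpace.norm_eq]
    rw [Real.sq_sqrt (Finset.sum_nonneg fun i _ => by positivity)]
    simp [MeasurableEquiv.toLp, sq_abs]
    rfl
  simp_rw [hnorm]
  have hexp : ∀ x : Fin d → ℝ, exp (-b * ∑ i, x i ^ 2) = ∏ i, exp (-b * x i ^ 2) := by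
    intro x
    rw [← Real.exp_sum, Finset.mul_sum]
  have hre : ∀ x : Fin d → ℝ, (∑ i, x i ^ 2) * exp (-b * ∑ i, x i ^ 2)
      = ∑ i, ∏ j, (if j = i then (fun y : ℝ => y ^ 2 * exp (-b * y ^ 2))
          else (fun y : ℝ => exp (-b * y ^ 2))) (x j) := by
    intro x
    rw [hexp, Finset.sum_mul]
    refine Finset.sum_congr rfl fun i _ => ?_
    conv_rhs => rw [← Finset.mul_prod_erase Finset.univ _ (Finset.mem_univ i)]
    have h1 : ((if i = i then (fun y : ℝ => y ^ 2 * exp (-b * y ^ 2))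
        else (fun y : ℝ => exp (-b * y ^ 2))) (x i)) = x i ^ 2 * exp (-b * x i ^ 2) := by
      rw [if_pos rfl]
    have h2 : (∏ j ∈ Finset.univ.erase i, ((if j = i then (fun y : ℝ => y ^ 2 * exp (-b * y ^ 2))
        else (fun y : ℝ => exp (-b * y ^ 2))) (x j)))
        = ∏ j ∈ Finset.univ.erase i, exp (-b * x j ^ 2) :=
      Finset.prod_congr rfl fun j hj => by rw [if_neg (Finset.mem_erase.1 hj).1]
    rw [h1, h2, mul_assoc]
    congr 1
    exact (Finset.mul_prod_erase Finset.univ (fun j => exp (-b * x j ^ 2))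
      (Finset.mem_univ i)).symm
  simp_rw [hre]
  rw [integral_finset_sum]
  · have hterm : ∀ i : Fin d,
        (∫ x : Fin d → ℝ, ∏ j, (if j = i then (fun y : ℝ => y ^ 2 * exp (-b * y ^ 2))
          else (fun y : ℝ => exp (-b * y ^ 2))) (x j))
        = (2 * b)⁻¹ * Real.sqrt (π / b) ^ d := by
      intro i
      rw [MeasureTheory.integral_fintype_prod_volume_eq_prod]
      rw [← Finset.mul_prod_erase Finset.univ _ (Finset.mem_univ i), if_pos rfl]
      have : ∀ j ∈ Finset.univ.erase i,
          (∫ x : ℝ, (if j = i then (fun y : ℝ => y ^ 2 * exp (-b * y ^ 2))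
            else (fun y : ℝ => exp (-b * y ^ 2))) x) = Real.sqrt (π / b) := by
        intro j hj
        rw [if_neg (Finset.mem_erase.1 hj).1]
        exact integral_gaussian b
      rw [Finset.prod_congr rfl this, Finset.prod_const, Finset.card_erase_of_mem
        (Finset.mem_univ i), Finset.card_univ, Fintype.card_fin, integral_sq_mul_exp hb,
        mul_assoc, ← pow_succ']
      have hdd : d - 1 + 1 = d := by omega
      rw [hdd]
    simp_rw [hterm, Finset.sum_const, Finset.card_univ, Fintype.card_fin, nsmul_eq_mul]
    ring
  · intro i _
    refine Integrable.fintype_prod fun j => ?_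
    by_cases h : j = i
    · simp only [h, eq_self_iff_true, if_true]
      exact integrable_sq_mul_exp hb
    · simp only [if_neg h]
      exact integrable_exp_neg_mul_sq hb

lemma mul_exp_half_le {b x : ℝ} (hb : 0 < b) (hx : 0 ≤ x) :
    x * exp (-(b / 2) * x ^ 2) ≤ Real.sqrt (2 / b) := by
  have hc : 0 < Real.sqrt (2 / b) := Real.sqrt_pos.2 (by positivity)
  have hc2 : Real.sqrt (2 / b) ^ 2 = 2 / b := Real.sq_sqrt (by positivity)
  have he : 1 + b / 2 * x ^ 2 ≤ exp (b / 2 * x ^ 2) := by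
    have := Real.add_one_le_exp (b / 2 * x ^ 2); linarith
  set c := Real.sqrt (2 / b) with hcdef
  have h6 : (c + b / 2 * x ^ 2 * c - x) * c = 2 / b + x ^ 2 - x * c := by
    have hb0 : b ≠ 0 := hb.ne'
    linear_combination (norm := (field_simp; ring)) (1 + b / 2 * x ^ 2) * hc2
  have h7 : 0 ≤ (c + b / 2 * x ^ 2 * c - x) * c := by
    rw [h6]; nlinarith [sq_nonneg (x - c), hc2, sq_nonneg x]
  have h5 : x ≤ c + b / 2 * x ^ 2 * c := by nlinarith [h7, hc]
  have hkey : x ≤ c * exp (b / 2 * x ^ 2) := by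
    nlinarith [h5, mul_le_mul_of_nonneg_left he hc.le]
  calc x * exp (-(b / 2) * x ^ 2)
      ≤ (Real.sqrt (2 / b) * exp (b / 2 * x ^ 2)) * exp (-(b / 2) * x ^ 2) :=
        mul_le_mul_of_nonneg_right hkey (exp_pos _).le
    _ = Real.sqrt (2 / b) := by rw [mul_assoc, ← Real.exp_add]; ring_nf; simp

lemma sq_mul_exp_half_le {b x : ℝ} (hb : 0 < b) :
    x ^ 2 * exp (-(b / 2) * x ^ 2) ≤ 2 / b := by
  have he : b / 2 * x ^ 2 ≤ exp (b / 2 * x ^ 2) := by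
    have := Real.add_one_le_exp (b / 2 * x ^ 2); linarith
  have hkey : x ^ 2 ≤ 2 / b * exp (b / 2 * x ^ 2) := by
    rw [div_mul_eq_mul_div, le_div_iff₀ hb]
    nlinarith
  calc x ^ 2 * exp (-(b / 2) * x ^ 2)
      ≤ (2 / b * exp (b / 2 * x ^ 2)) * exp (-(b / 2) * x ^ 2) :=
        mul_le_mul_of_nonneg_right hkey (exp_pos _).le
    _ = 2 / b := by rw [mul_assoc, ← Real.exp_add]; ring_nf; simp

lemma integrableE_norm_mul {d : ℕ} {b : ℝ} (hb : 0 < b) :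
    Integrable (fun v : EuclideanSpace ℝ (Fin d) => ‖v‖ * exp (-b * ‖v‖ ^ 2)) := by
  refine Integrable.mono' ((integrableE_exp (half_pos hb)).const_mul (Real.sqrt (2 / b)))
    ((continuous_norm.mul (Real.continuous_exp.comp
      (continuous_const.mul (continuous_norm.pow 2)))).aestronglyMeasurable)
    (Filter.Eventually.of_forall fun v => ?_)
  rw [Real.norm_of_nonneg (by positivity)]
  have : (-b) * ‖v‖ ^ 2 = -(b / 2) * ‖v‖ ^ 2 + -(b / 2) * ‖v‖ ^ 2 := by ring
  rw [this, Real.exp_add, ← mul_assoc]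
  exact mul_le_mul_of_nonneg_right (mul_exp_half_le hb (norm_nonneg v)) (exp_pos _).le

lemma integrableE_sq_mul {d : ℕ} {b : ℝ} (hb : 0 < b) :
    Integrable (fun v : EuclideanSpace ℝ (Fin d) => ‖v‖ ^ 2 * exp (-b * ‖v‖ ^ 2)) := by
  refine Integrable.mono' ((integrableE_exp (half_pos hb)).const_mul (2 / b))
    (((continuous_norm.pow 2).mul (Real.continuous_exp.comp
      (continuous_const.mul (continuous_norm.pow 2)))).aestronglyMeasurable)
    (Filter.Eventually.of_forall fun v => ?_)
  rw [Real.norm_of_nonneg (by positivity)]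
  have : (-b) * ‖v‖ ^ 2 = -(b / 2) * ‖v‖ ^ 2 + -(b / 2) * ‖v‖ ^ 2 := by ring
  rw [this, Real.exp_add, ← mul_assoc]
  exact mul_le_mul_of_nonneg_right (sq_mul_exp_half_le hb) (exp_pos _).le

noncomputable section

variable {d : ℕ} {σ : ℝ}

lemma gd_form (v : EuclideanSpace ℝ (Fin d)) :
    gaussDensity d σ v = (2 * π * σ ^ 2) ^ (-(d : ℝ) / 2) * exp (-(2 * σ ^ 2)⁻¹ * ‖v‖ ^ 2) := by
  rw [gaussDensity]
  congr 1
  ring_nf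

lemma gd_pos (hσ : 0 < σ) (v : EuclideanSpace ℝ (Fin d)) : 0 < gaussDensity d σ v := by
  rw [gaussDensity]
  have : (0:ℝ) < 2 * π * σ ^ 2 := by positivity
  positivity

lemma hbpos (hσ : 0 < σ) : (0:ℝ) < (2 * σ ^ 2)⁻¹ := by positivity

lemma hCA (hσ : 0 < σ) :
    (2 * π * σ ^ 2) ^ (-(d : ℝ) / 2) * Real.sqrt (π / (2 * σ ^ 2)⁻¹) ^ d = 1 := by
  have h2πσ : (0:ℝ) < 2 * π * σ ^ 2 := by positivity
  have hπb : π / (2 * σ ^ 2)⁻¹ = 2 * π * σ ^ 2 := by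
    field_simp
  rw [hπb, Real.sqrt_eq_rpow, ← Real.rpow_natCast ((2 * π * σ ^ 2) ^ (1/2 : ℝ)) d,
    ← Real.rpow_mul h2πσ.le, ← Real.rpow_add h2πσ]
  rw [show -(d:ℝ) / 2 + 1 / 2 * (d:ℝ) = 0 by ring]
  exact Real.rpow_zero _

lemma gd_integrable (hσ : 0 < σ) :
    Integrable (fun v : EuclideanSpace ℝ (Fin d) => gaussDensity d σ v) := by
  simp_rw [gd_form]
  exact (integrableE_exp (hbpos hσ)).const_mul _

lemma gd_norm_integrable (hσ : 0 < σ) :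
    Integrable (fun v : EuclideanSpace ℝ (Fin d) => ‖v‖ * gaussDensity d σ v) := by
  simp_rw [gd_form]
  have := (integrableE_norm_mul (d := d) (hbpos hσ)).const_mul ((2 * π * σ ^ 2) ^ (-(d : ℝ) / 2))
  refine this.congr (Filter.Eventually.of_forall fun v => by ring)

lemma gd_sq_integrable (hσ : 0 < σ) :
    Integrable (fun v : EuclideanSpace ℝ (Fin d) => ‖v‖ ^ 2 * gaussDensity d σ v) := by
  simp_rw [gd_form]
  have := (integrableE_sq_mul (d := d) (hbpos hσ)).const_mul ((2 * π * σ ^ 2) ^ (-(d : ℝ) / 2))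
  refine this.congr (Filter.Eventually.of_forall fun v => by ring)

lemma gd_integral (hσ : 0 < σ) :
    ∫ v : EuclideanSpace ℝ (Fin d), gaussDensity d σ v = 1 := by
  simp_rw [gd_form]
  rw [MeasureTheory.integral_const_mul, integralE_exp (hbpos hσ)]
  exact hCA hσ

lemma gd_sq_integral (hd : 1 ≤ d) (hσ : 0 < σ) :
    ∫ v : EuclideanSpace ℝ (Fin d), ‖v‖ ^ 2 * gaussDensity d σ v = d * σ ^ 2 := by
  have hb := hbpos hσ
  have h1 : ∀ v : EuclideanSpace ℝ (Fin d), ‖v‖ ^ 2 * gaussDensity d σ v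
      = (2 * π * σ ^ 2) ^ (-(d : ℝ) / 2) * (‖v‖ ^ 2 * exp (-(2 * σ ^ 2)⁻¹ * ‖v‖ ^ 2)) := by
    intro v; rw [gd_form]; ring
  simp_rw [h1]
  rw [MeasureTheory.integral_const_mul, integralE_sq hb hd]
  have h2 : (2 * (2 * σ ^ 2)⁻¹)⁻¹ = σ ^ 2 := by
    rw [mul_inv, inv_inv]
    field_simp
  rw [h2]
  have hca := hCA (d := d) (σ := σ) hσ
  linear_combination ((d:ℝ) * σ ^ 2) * hca

lemma gd_norm_integral_le (hd : 1 ≤ d) (hσ : 0 < σ) :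
    ∫ v : EuclideanSpace ℝ (Fin d), ‖v‖ * gaussDensity d σ v ≤ σ * Real.sqrt d := by
  set c : ℝ := σ * Real.sqrt d with hc
  have hd0 : (0:ℝ) < d := by exact_mod_cast Nat.pos_of_ne_zero (by omega)
  have hcpos : 0 < c := by
    have : (0:ℝ) < Real.sqrt d := Real.sqrt_pos.2 hd0
    positivity
  have hbound : ∀ v : EuclideanSpace ℝ (Fin d),
      ‖v‖ * gaussDensity d σ v ≤
        ((2 * c)⁻¹ * (‖v‖ ^ 2 * gaussDensity d σ v) + (c / 2) * gaussDensity d σ v) := by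
    intro v
    have hgd := (gd_pos hσ v).le
    have hn : ‖v‖ ≤ (2 * c)⁻¹ * ‖v‖ ^ 2 + c / 2 := by
      have h := sq_nonneg (‖v‖ - c)
      rw [inv_mul_eq_div, div_add_div _ _ (by positivity) (by norm_num : (2:ℝ) ≠ 0),
        le_div_iff₀ (by positivity)]
      ring_nf
      nlinarith [sq_nonneg (‖v‖ - σ * Real.sqrt (d:ℝ))]
    calc ‖v‖ * gaussDensity d σ v ≤ ((2 * c)⁻¹ * ‖v‖ ^ 2 + c / 2) * gaussDensity d σ v :=
          mul_le_mul_of_nonneg_right hn hgd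
      _ = (2 * c)⁻¹ * (‖v‖ ^ 2 * gaussDensity d σ v) + (c / 2) * gaussDensity d σ v := by ring
  have hInt2 : Integrable (fun v : EuclideanSpace ℝ (Fin d) =>
      (2 * c)⁻¹ * (‖v‖ ^ 2 * gaussDensity d σ v) + (c / 2) * gaussDensity d σ v) :=
    ((gd_sq_integrable hσ).const_mul _).add ((gd_integrable hσ).const_mul _)
  have := MeasureTheory.integral_mono (gd_norm_integrable hσ) hInt2 hbound
  rw [MeasureTheory.integral_add ((gd_sq_integrable hσ).const_mul _)
    ((gd_integrable hσ).const_mul _), MeasureTheory.integral_const_mul,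
    MeasureTheory.integral_const_mul, gd_sq_integral hd hσ, gd_integral hσ] at this
  refine this.trans (le_of_eq ?_)
  have hsq : Real.sqrt d ^ 2 = (d:ℝ) := Real.sq_sqrt hd0.le
  rw [hc]
  field_simp
  nlinarith [hsq, Real.sqrt_nonneg (d:ℝ), hσ]

open RealInnerProductSpace

/-- `L¹`-continuity of the Gaussian location family: for all shifts `θ, θ'`,
`∫ |h_σ(v − θ) − h_σ(v − θ')| dv ≤ (√d/σ)·‖θ − θ'‖`. -/
theorem statement2 (d : ℕ) (hd : 1 ≤ d) (σ : ℝ) (hσ : 0 < σ)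
    (θ θ' : EuclideanSpace ℝ (Fin d)) :
    ∫ v, |gaussDensity d σ (v - θ) - gaussDensity d σ (v - θ')| ≤
      Real.sqrt d / σ * ‖θ - θ'‖ := by
  set Δ : EuclideanSpace ℝ (Fin d) := θ - θ' with hΔdef
  have hgdc : Continuous (fun v : EuclideanSpace ℝ (Fin d) => gaussDensity d σ v) := by
    unfold gaussDensity
    exact continuous_const.mul (Real.continuous_exp.comp
      ((continuous_norm.pow 2).neg.div_const _))
  set ψ : ℝ → EuclideanSpace ℝ (Fin d) → ℝ :=
    fun t v => ‖Δ‖ / σ ^ 2 * (‖v - θ' - t • Δ‖ * gaussDensity d σ (v - θ' - t • Δ)) with hψdef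
  have hψcont : Continuous (fun p : ℝ × EuclideanSpace ℝ (Fin d) => ψ p.1 p.2) := by
    have hsub : Continuous (fun p : ℝ × EuclideanSpace ℝ (Fin d) => p.2 - θ' - p.1 • Δ) :=
      (continuous_snd.sub continuous_const).sub (continuous_fst.smul continuous_const)
    exact continuous_const.mul ((hsub.norm).mul (hgdc.comp hsub))
  have hψnn : ∀ (t : ℝ) (v : EuclideanSpace ℝ (Fin d)), 0 ≤ ψ t v := fun t v => by
    have h := (gd_pos hσ (v - θ' - t • Δ)).le
    simp only [hψdef]
    positivity
  -- pointwise FTC bound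
  have hptw : ∀ v : EuclideanSpace ℝ (Fin d),
      |gaussDensity d σ (v - θ) - gaussDensity d σ (v - θ')| ≤ ∫ t in (0:ℝ)..1, ψ t v := by
    intro v
    set f' : ℝ → ℝ := fun t => gaussDensity d σ (v - θ' - t • Δ) *
      ((⟪v - θ', Δ⟫ - t * ‖Δ‖ ^ 2) / σ ^ 2) with hf'def
    have hqd : ∀ t : ℝ, gaussDensity d σ (v - θ' - t • Δ)
        = (2 * π * σ ^ 2) ^ (-(d : ℝ) / 2) *
          exp (-(‖v - θ'‖ ^ 2 - 2 * t * ⟪v - θ', Δ⟫ + t ^ 2 * ‖Δ‖ ^ 2) / (2 * σ ^ 2)) := by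
      intro t
      rw [gaussDensity]
      congr 2
      rw [norm_sub_sq_real, real_inner_smul_right, norm_smul, mul_pow, Real.norm_eq_abs, sq_abs]
      ring
    have hderiv : ∀ t : ℝ,
        HasDerivAt (fun t : ℝ => gaussDensity d σ (v - θ' - t • Δ)) (f' t) t := by
      intro t
      have h1 : HasDerivAt (fun t : ℝ => ‖v - θ'‖ ^ 2 - 2 * t * ⟪v - θ', Δ⟫ + t ^ 2 * ‖Δ‖ ^ 2)
          (0 - 2 * ⟪v - θ', Δ⟫ + 2 * t * ‖Δ‖ ^ 2) t := by
        have ha : HasDerivAt (fun t : ℝ => 2 * t * ⟪v - θ', Δ⟫) (2 * ⟪v - θ', Δ⟫) t := by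
          simpa using (((hasDerivAt_id t).const_mul (2:ℝ)).mul_const ⟪v - θ', Δ⟫)
        have hb : HasDerivAt (fun t : ℝ => t ^ 2 * ‖Δ‖ ^ 2) (2 * t * ‖Δ‖ ^ 2) t := by
          have := (hasDerivAt_pow 2 t).mul_const (‖Δ‖ ^ 2)
          simpa [mul_comm, mul_assoc] using this
        exact (((hasDerivAt_const t (‖v - θ'‖ ^ 2)).sub ha).add hb)
      have h2 := (((h1.neg).div_const (2 * σ ^ 2)).exp).const_mul
        ((2 * π * σ ^ 2) ^ (-(d : ℝ) / 2))
      have hfun : (fun t : ℝ => gaussDensity d σ (v - θ' - t • Δ))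
          = fun t : ℝ => (2 * π * σ ^ 2) ^ (-(d : ℝ) / 2) *
            exp (-(‖v - θ'‖ ^ 2 - 2 * t * ⟪v - θ', Δ⟫ + t ^ 2 * ‖Δ‖ ^ 2) / (2 * σ ^ 2)) :=
        funext hqd
      rw [hfun]
      have hval : f' t = (2 * π * σ ^ 2) ^ (-(d : ℝ) / 2) *
          (exp (-(‖v - θ'‖ ^ 2 - 2 * t * ⟪v - θ', Δ⟫ + t ^ 2 * ‖Δ‖ ^ 2) / (2 * σ ^ 2)) *
            (-(0 - 2 * ⟪v - θ', Δ⟫ + 2 * t * ‖Δ‖ ^ 2) / (2 * σ ^ 2))) := by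
        simp only [hf'def]
        rw [hqd t]
        field_simp
        ring
      rw [hval]
      exact h2
    have hf'cont : Continuous f' := by
      have hsub : Continuous (fun t : ℝ => v - θ' - t • Δ) :=
        continuous_const.sub (continuous_id.smul continuous_const)
      exact (hgdc.comp hsub).mul ((continuous_const.sub
        (continuous_id.mul continuous_const)).div_const _)
    have hftc : gaussDensity d σ (v - θ) - gaussDensity d σ (v - θ')
        = ∫ t in (0:ℝ)..1, f' t := by
      have h := intervalIntegral.integral_eq_sub_of_hasDerivAt
        (f := fun t : ℝ => gaussDensity d σ (v - θ' - t • Δ)) (f' := f') (a := 0) (b := 1)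
        (fun t _ => hderiv t) (hf'cont.intervalIntegrable 0 1)
      simp only [one_smul, zero_smul, sub_zero] at h
      have e1 : v - θ' - Δ = v - θ := by rw [hΔdef]; abel
      rw [e1] at h
      exact h.symm
    calc |gaussDensity d σ (v - θ) - gaussDensity d σ (v - θ')|
        = |∫ t in (0:ℝ)..1, f' t| := by rw [hftc]
      _ ≤ ∫ t in (0:ℝ)..1, |f' t| :=
          intervalIntegral.abs_integral_le_integral_abs zero_le_one
      _ ≤ ∫ t in (0:ℝ)..1, ψ t v := by
          refine intervalIntegral.integral_mono_on zero_le_one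
            (hf'cont.abs.intervalIntegrable 0 1)
            ((hψcont.comp (continuous_id.prodMk continuous_const)).intervalIntegrable 0 1)
            fun t _ => ?_
          have hinner : ⟪v - θ', Δ⟫ - t * ‖Δ‖ ^ 2 = ⟪v - θ' - t • Δ, Δ⟫ := by
            conv_rhs => rw [inner_sub_left, real_inner_smul_left]
            rw [real_inner_self_eq_norm_sq]
          have hcs : |⟪v - θ', Δ⟫ - t * ‖Δ‖ ^ 2| ≤ ‖v - θ' - t • Δ‖ * ‖Δ‖ := by
            rw [hinner]; exact abs_real_inner_le_norm _ _
          simp only [hf'def, hψdef]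
          rw [abs_mul, abs_of_nonneg (gd_pos hσ (v - θ' - t • Δ)).le, abs_div,
            abs_of_nonneg (sq_nonneg σ)]
          calc gaussDensity d σ (v - θ' - t • Δ) * (|⟪v - θ', Δ⟫ - t * ‖Δ‖ ^ 2| / σ ^ 2)
              ≤ gaussDensity d σ (v - θ' - t • Δ) * ((‖v - θ' - t • Δ‖ * ‖Δ‖) / σ ^ 2) := by
                exact mul_le_mul_of_nonneg_left
                  ((div_le_div_iff_of_pos_right (by positivity)).2 hcs) (gd_pos hσ _).le
            _ = ‖Δ‖ / σ ^ 2 * (‖v - θ' - t • Δ‖ * gaussDensity d σ (v - θ' - t • Δ)) := by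
                ring
  -- Fubini and conclusion
  have hInt_t : ∀ t : ℝ, Integrable (fun v : EuclideanSpace ℝ (Fin d) => ψ t v) := by
    intro t
    have h1 := (((gd_norm_integrable (d := d) hσ).comp_sub_right
      (θ' + t • Δ)).const_mul (‖Δ‖ / σ ^ 2))
    refine h1.congr (Filter.Eventually.of_forall fun v => ?_)
    simp only [hψdef]
    rw [sub_add_eq_sub_sub]
  have hint_eq : ∀ t : ℝ, ∫ v : EuclideanSpace ℝ (Fin d), ψ t v
      = ‖Δ‖ / σ ^ 2 * ∫ v : EuclideanSpace ℝ (Fin d), ‖v‖ * gaussDensity d σ v := by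
    intro t
    simp only [hψdef]
    rw [MeasureTheory.integral_const_mul]
    congr 1
    have hrw : ∀ v : EuclideanSpace ℝ (Fin d), v - θ' - t • Δ = v - (θ' + t • Δ) :=
      fun v => (sub_add_eq_sub_sub v θ' (t • Δ)).symm
    simp_rw [hrw]
    exact MeasureTheory.integral_sub_right_eq_self
      (fun u : EuclideanSpace ℝ (Fin d) => ‖u‖ * gaussDensity d σ u) (θ' + t • Δ)
  have hprod : Integrable (fun p : ℝ × EuclideanSpace ℝ (Fin d) => ψ p.1 p.2)
      ((volume.restrict (Set.Ioc (0:ℝ) 1)).prod volume) := by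
    rw [MeasureTheory.integrable_prod_iff (hψcont.aestronglyMeasurable)]
    refine ⟨MeasureTheory.ae_of_all _ fun t => hInt_t t, ?_⟩
    have hconst : (fun t : ℝ => ∫ v : EuclideanSpace ℝ (Fin d), ‖ψ t v‖)
        = fun _ : ℝ => ‖Δ‖ / σ ^ 2 * ∫ v : EuclideanSpace ℝ (Fin d), ‖v‖ * gaussDensity d σ v := by
      funext t
      have hn : ∀ v : EuclideanSpace ℝ (Fin d), ‖ψ t v‖ = ψ t v :=
        fun v => Real.norm_of_nonneg (hψnn t v)
      simp_rw [hn]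
      exact hint_eq t
    rw [hconst]
    exact MeasureTheory.integrableOn_const measure_Ioc_lt_top.ne
  have hprod' : Integrable (Function.uncurry ψ)
      ((volume.restrict (Set.Ioc (0:ℝ) 1)).prod volume) := hprod
  have hswap := MeasureTheory.integral_integral_swap hprod'
  have hptw2 : ∀ v : EuclideanSpace ℝ (Fin d),
      |gaussDensity d σ (v - θ) - gaussDensity d σ (v - θ')|
        ≤ ∫ t in Set.Ioc (0:ℝ) 1, ψ t v := fun v =>
    (hptw v).trans_eq (intervalIntegral.integral_of_le zero_le_one)
  have habs_int : Integrable (fun v : EuclideanSpace ℝ (Fin d) =>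
      |gaussDensity d σ (v - θ) - gaussDensity d σ (v - θ')|) :=
    (((gd_integrable hσ).comp_sub_right θ).sub ((gd_integrable hσ).comp_sub_right θ')).abs
  have hF_int : Integrable (fun v : EuclideanSpace ℝ (Fin d) =>
      ∫ t in Set.Ioc (0:ℝ) 1, ψ t v) volume := hprod.integral_prod_right
  have hM := gd_norm_integral_le (d := d) (σ := σ) hd hσ
  calc ∫ v, |gaussDensity d σ (v - θ) - gaussDensity d σ (v - θ')|
      ≤ ∫ v : EuclideanSpace ℝ (Fin d), ∫ t in Set.Ioc (0:ℝ) 1, ψ t v :=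
        MeasureTheory.integral_mono habs_int hF_int hptw2
    _ = ∫ t in Set.Ioc (0:ℝ) 1, ∫ v : EuclideanSpace ℝ (Fin d), ψ t v := hswap.symm
    _ = ∫ _t in Set.Ioc (0:ℝ) 1,
          (‖Δ‖ / σ ^ 2 * ∫ v : EuclideanSpace ℝ (Fin d), ‖v‖ * gaussDensity d σ v) := by
        simp_rw [hint_eq]
    _ = ‖Δ‖ / σ ^ 2 * ∫ v : EuclideanSpace ℝ (Fin d), ‖v‖ * gaussDensity d σ v := by
        rw [MeasureTheory.setIntegral_const]
        simp [Real.volume_Ioc]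
    _ ≤ ‖Δ‖ / σ ^ 2 * (σ * Real.sqrt d) :=
        mul_le_mul_of_nonneg_left hM (by positivity)
    _ = Real.sqrt d / σ * ‖Δ‖ := by field_simp
end
end

section
/- Let W ⊆ ℝ^p, let x be fixed, and let w ∈ W ↦ ψ_w(x) ∈ ℝ^d be Lipschitz continuous with constant L_W. Then for every λ > 0 and every y ∈ Y, the map w ∈ W ↦ p_λ(y|ψ_w(x)) is Lipschitz continuous with constant L_W·√d/λ, where p_λ(y|θ) := E_Z[p_0(y| θ + λ·Z)] and Z is a standard Gaussian random vector in ℝ^d (law N(0, I_d)). -/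
open MeasureTheory Metric Real
open scoped RealInnerProductSpace

noncomputable section

/-- Normal cone `F_y` of the finite set `Y` at the point `y`. -/
def normalCone {d : ℕ} (Y : Finset (EuclideanSpace ℝ (Fin d)))
    (y : EuclideanSpace ℝ (Fin d)) : Set (EuclideanSpace ℝ (Fin d)) :=
  {θ | ∀ y' ∈ Y, ⟪y', θ⟫ ≤ ⟪y, θ⟫}

/-- Internal cone radius `ρ(θ)`. -/
def coneRadius {d : ℕ} (Y : Finset (EuclideanSpace ℝ (Fin d)))
    (θ : EuclideanSpace ℝ (Fin d)) : ℝ :=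
  sSup {r : ℝ | 0 < r ∧ ∀ u ∈ closedBall (0 : EuclideanSpace ℝ (Fin d)) 1,
    ∃ y ∈ Y, θ ∈ normalCone Y y ∧ θ + r • u ∈ normalCone Y y}

/-- Uniform probability measure on the closed Euclidean unit ball of `ℝ^d`. -/
def uniformBall (d : ℕ) : Measure (EuclideanSpace ℝ (Fin d)) :=
  (volume (closedBall (0 : EuclideanSpace ℝ (Fin d)) 1))⁻¹ •
    volume.restrict (closedBall (0 : EuclideanSpace ℝ (Fin d)) 1)

/-- `p_0(y|θ) = P[θ + ρ(θ)·U ∈ F_y]` for `U` uniform on the closed unit ball. -/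
def p0 {d : ℕ} (Y : Finset (EuclideanSpace ℝ (Fin d)))
    (y θ : EuclideanSpace ℝ (Fin d)) : ℝ :=
  (uniformBall d {u | θ + coneRadius Y θ • u ∈ normalCone Y y}).toReal



open Set Filter Topology
open scoped ENNReal NNReal

variable {d : ℕ} (Y : Finset (EuclideanSpace ℝ (Fin d)))

def Scone (θ : EuclideanSpace ℝ (Fin d)) : Set ℝ :=
  {r : ℝ | 0 < r ∧ ∀ u ∈ closedBall (0 : EuclideanSpace ℝ (Fin d)) 1,
    ∃ y ∈ Y, θ ∈ normalCone Y y ∧ θ + r • u ∈ normalCone Y y}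

lemma coneRadius_eq (θ : EuclideanSpace ℝ (Fin d)) :
    coneRadius Y θ = sSup (Scone Y θ) := rfl

lemma isClosed_normalCone (y : EuclideanSpace ℝ (Fin d)) : IsClosed (normalCone Y y) := by
  have : normalCone Y y = ⋂ y' ∈ Y, {θ | ⟪y', θ⟫ ≤ ⟪y, θ⟫} := by
    ext θ; simp [normalCone]
  rw [this]
  exact isClosed_biInter fun y' _ =>
    isClosed_le (Continuous.inner continuous_const continuous_id)
      (Continuous.inner continuous_const continuous_id)

lemma Scone_down {θ : EuclideanSpace ℝ (Fin d)} {r r' : ℝ} (hr : r ∈ Scone Y θ)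
    (h0 : 0 < r') (hle : r' ≤ r) : r' ∈ Scone Y θ := by
  refine ⟨h0, fun u hu => ?_⟩
  have hrpos := hr.1
  have hmem : (r' / r) • u ∈ closedBall (0 : EuclideanSpace ℝ (Fin d)) 1 := by
    rw [mem_closedBall_zero_iff] at hu ⊢
    rw [norm_smul]
    have h1 : ‖(r' / r : ℝ)‖ ≤ 1 := by
      rw [Real.norm_eq_abs, abs_of_pos (div_pos h0 hrpos)]
      exact div_le_one_of_le₀ hle hrpos.le
    calc ‖(r' / r : ℝ)‖ * ‖u‖ ≤ 1 * 1 := by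
          exact mul_le_mul h1 hu (norm_nonneg _) zero_le_one
      _ = 1 := by ring
  obtain ⟨y', hy', h1, h2⟩ := hr.2 _ hmem
  refine ⟨y', hy', h1, ?_⟩
  rwa [smul_smul, mul_div_cancel₀ _ (ne_of_gt hrpos)] at h2

lemma measurableSet_Scone_mem (q : ℝ) :
    MeasurableSet {θ : EuclideanSpace ℝ (Fin d) | q ∈ Scone Y θ} := by
  rcases le_or_gt q 0 with hq | hq
  · have : {θ : EuclideanSpace ℝ (Fin d) | q ∈ Scone Y θ} = ∅ := by
      ext θ; simp only [mem_setOf_eq, mem_empty_iff_false, iff_false]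
      intro h; exact absurd h.1 (not_lt.2 hq)
    rw [this]; exact MeasurableSet.empty
  obtain ⟨D, Dcount, Ddense⟩ := TopologicalSpace.exists_countable_dense
    (EuclideanSpace ℝ (Fin d))
  have key : {θ : EuclideanSpace ℝ (Fin d) | q ∈ Scone Y θ} =
      ⋂ u ∈ D ∩ ball (0 : EuclideanSpace ℝ (Fin d)) 1,
        ⋃ y' ∈ Y, (normalCone Y y' ∩ {θ | θ + q • u ∈ normalCone Y y'}) := by
    ext θ
    simp only [mem_setOf_eq, mem_iInter, mem_iUnion, mem_inter_iff]
    constructor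
    · rintro ⟨-, h⟩ u ⟨-, hu⟩
      obtain ⟨y', hy', h1, h2⟩ := h u (ball_subset_closedBall hu)
      exact ⟨y', hy', h1, h2⟩
    · intro h
      refine ⟨hq, fun u hu => ?_⟩
      set K : Set (EuclideanSpace ℝ (Fin d)) :=
        ⋃ y' ∈ Y, (({v : EuclideanSpace ℝ (Fin d) | θ ∈ normalCone Y y'}) ∩
          {v | θ + q • v ∈ normalCone Y y'}) with hK
      have hKclosed : IsClosed K := by
        refine Set.Finite.isClosed_biUnion Y.finite_toSet fun y' _ => IsClosed.inter ?_ ?_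
        · by_cases hθ : θ ∈ normalCone Y y'
          · have : {v : EuclideanSpace ℝ (Fin d) | θ ∈ normalCone Y y'} = univ := by
              ext; simp [hθ]
            rw [this]; exact isClosed_univ
          · have : {v : EuclideanSpace ℝ (Fin d) | θ ∈ normalCone Y y'} = ∅ := by
              ext; simp [hθ]
            rw [this]; exact isClosed_empty
        · exact (isClosed_normalCone Y y').preimage
            (continuous_const.add (continuous_id.const_smul q))
      have hsub : D ∩ ball (0 : EuclideanSpace ℝ (Fin d)) 1 ⊆ K := by
        rintro v ⟨hvD, hvb⟩
        obtain ⟨y', hy', h1, h2⟩ := h v ⟨hvD, hvb⟩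
        exact mem_iUnion₂.2 ⟨y', hy', h1, h2⟩
      have hball : ball (0 : EuclideanSpace ℝ (Fin d)) 1 ⊆
          closure (D ∩ ball (0 : EuclideanSpace ℝ (Fin d)) 1) := by
        intro v hv
        have := Ddense.open_subset_closure_inter isOpen_ball hv
        rwa [inter_comm] at this
      have hcb : closedBall (0 : EuclideanSpace ℝ (Fin d)) 1 ⊆ K := by
        have h1 : closedBall (0 : EuclideanSpace ℝ (Fin d)) 1 =
            closure (ball (0 : EuclideanSpace ℝ (Fin d)) 1) :=
          (closure_ball (0 : EuclideanSpace ℝ (Fin d)) one_ne_zero).symm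
        rw [h1]
        calc closure (ball (0 : EuclideanSpace ℝ (Fin d)) 1)
            ⊆ closure (closure (D ∩ ball (0 : EuclideanSpace ℝ (Fin d)) 1)) :=
              closure_mono hball
          _ = closure (D ∩ ball (0 : EuclideanSpace ℝ (Fin d)) 1) := closure_closure
          _ ⊆ closure K := closure_mono hsub
          _ = K := hKclosed.closure_eq
      have := hcb hu
      rw [hK] at this
      obtain ⟨y', hy', hmem⟩ := mem_iUnion₂.1 this
      exact ⟨y', hy', hmem.1, hmem.2⟩
  rw [key]
  refine MeasurableSet.biInter (Dcount.mono inter_subset_left) fun u _ => ?_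
  refine MeasurableSet.biUnion Y.countable_toSet fun y' _ => ?_
  exact ((isClosed_normalCone Y y').measurableSet).inter
    (((isClosed_normalCone Y y').preimage
      (continuous_id.add continuous_const)).measurableSet)

lemma coneRadius_nonneg (θ : EuclideanSpace ℝ (Fin d)) : 0 ≤ coneRadius Y θ :=
  Real.sSup_nonneg fun _ hx => hx.1.le

lemma measurable_coneRadius : Measurable (coneRadius Y) := by
  apply measurable_of_Ioi
  intro c
  rcases lt_or_ge c 0 with hc | hc
  · have : coneRadius Y ⁻¹' Ioi c = univ := by
      ext θ; simp only [mem_preimage, mem_Ioi, mem_univ, iff_true]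
      exact lt_of_lt_of_le hc (coneRadius_nonneg Y θ)
    rw [this]; exact MeasurableSet.univ
  · have key : coneRadius Y ⁻¹' Ioi c =
        (⋃ q : ℚ, ⋃ _ : c < (q : ℝ), {θ | (q : ℝ) ∈ Scone Y θ}) ∩
          (⋂ q : ℚ, ⋂ _ : (0:ℝ) < (q : ℝ), {θ | (q : ℝ) ∈ Scone Y θ})ᶜ := by
      ext θ
      simp only [mem_preimage, mem_Ioi, mem_inter_iff, mem_iUnion, mem_compl_iff, mem_iInter,
        mem_setOf_eq, not_forall]
      constructor
      · intro h
        have hne : (Scone Y θ).Nonempty := by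
          by_contra hne
          rw [coneRadius_eq, not_nonempty_iff_eq_empty.1 hne, Real.sSup_empty] at h
          exact absurd h (not_lt.2 hc)
        have hbdd : BddAbove (Scone Y θ) := by
          by_contra hbdd
          rw [coneRadius_eq, Real.sSup_of_not_bddAbove hbdd] at h
          exact absurd h (not_lt.2 hc)
        rw [coneRadius_eq] at h
        obtain ⟨r, hrS, hrc⟩ := exists_lt_of_lt_csSup hne h
        obtain ⟨q, hq1, hq2⟩ := exists_rat_btwn hrc
        refine ⟨⟨q, hq1, Scone_down Y hrS (lt_of_le_of_lt hc hq1) hq2.le⟩, ?_⟩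
        by_contra hall
        push_neg at hall
        obtain ⟨b, hb⟩ := hbdd
        obtain ⟨q₀, hq₀⟩ := exists_rat_gt (max b 0)
        have hq₀pos : (0:ℝ) < (q₀ : ℝ) := lt_of_le_of_lt (le_max_right _ _) hq₀
        have hmem : (q₀ : ℝ) ∈ Scone Y θ := hall q₀ hq₀pos
        exact absurd (hb hmem) (not_le.2 (lt_of_le_of_lt (le_max_left _ _) hq₀))
      · rintro ⟨⟨q, hqc, hqS⟩, ⟨q₀, hq₀pos, hq₀not⟩⟩
        have hbdd : BddAbove (Scone Y θ) := by
          refine ⟨(q₀ : ℝ), fun r hr => ?_⟩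
          by_contra hcon
          exact hq₀not (Scone_down Y hr hq₀pos (not_le.1 hcon).le)
        rw [coneRadius_eq]
        exact lt_of_lt_of_le hqc (le_csSup hbdd hqS)
    rw [key]
    refine MeasurableSet.inter ?_ ?_
    · exact MeasurableSet.iUnion fun q => MeasurableSet.iUnion fun _ =>
        measurableSet_Scone_mem Y _
    · exact (MeasurableSet.iInter fun q => MeasurableSet.iInter fun _ =>
        measurableSet_Scone_mem Y _).compl

lemma volume_closedBall_pos :
    0 < volume (closedBall (0 : EuclideanSpace ℝ (Fin d)) 1) :=
  lt_of_lt_of_le (measure_ball_pos volume 0 one_pos) (measure_mono ball_subset_closedBall)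

lemma volume_closedBall_ne_top :
    volume (closedBall (0 : EuclideanSpace ℝ (Fin d)) 1) ≠ ⊤ :=
  (measure_closedBall_lt_top).ne

instance uniformBall_finite : IsFiniteMeasure (uniformBall d) := by
  constructor
  rw [uniformBall, Measure.smul_apply, Measure.restrict_apply MeasurableSet.univ,
    univ_inter, smul_eq_mul, ENNReal.inv_mul_cancel (volume_closedBall_pos).ne'
    volume_closedBall_ne_top]
  exact ENNReal.one_lt_top

lemma uniformBall_univ : uniformBall d Set.univ = 1 := by
  rw [uniformBall, Measure.smul_apply, Measure.restrict_apply MeasurableSet.univ,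
    univ_inter, smul_eq_mul, ENNReal.inv_mul_cancel (volume_closedBall_pos).ne'
    volume_closedBall_ne_top]

lemma p0_nonneg (y θ : EuclideanSpace ℝ (Fin d)) : 0 ≤ p0 Y y θ := ENNReal.toReal_nonneg

lemma p0_le_one (y θ : EuclideanSpace ℝ (Fin d)) : p0 Y y θ ≤ 1 := by
  rw [p0]
  have h : uniformBall d {u | θ + coneRadius Y θ • u ∈ normalCone Y y} ≤ 1 := by
    rw [← uniformBall_univ]
    exact measure_mono (subset_univ _)
  calc (uniformBall d {u | θ + coneRadius Y θ • u ∈ normalCone Y y}).toReal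
      ≤ (1 : ℝ≥0∞).toReal := ENNReal.toReal_mono ENNReal.one_ne_top h
    _ = 1 := ENNReal.toReal_one

lemma measurable_p0 (y : EuclideanSpace ℝ (Fin d)) : Measurable (p0 Y y) := by
  have hs : MeasurableSet {p : (EuclideanSpace ℝ (Fin d) × ℝ) × EuclideanSpace ℝ (Fin d) |
      p.1.1 + p.1.2 • p.2 ∈ normalCone Y y} := by
    have hc : Continuous fun p : (EuclideanSpace ℝ (Fin d) × ℝ) × EuclideanSpace ℝ (Fin d) =>
        p.1.1 + p.1.2 • p.2 :=
      (continuous_fst.comp continuous_fst).add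
        ((continuous_snd.comp continuous_fst).smul continuous_snd)
    exact ((isClosed_normalCone Y y).preimage hc).measurableSet
  have hG : Measurable fun x : EuclideanSpace ℝ (Fin d) × ℝ =>
      uniformBall d (Prod.mk x ⁻¹' {p : (EuclideanSpace ℝ (Fin d) × ℝ) ×
        EuclideanSpace ℝ (Fin d) | p.1.1 + p.1.2 • p.2 ∈ normalCone Y y}) :=
    measurable_measure_prodMk_left hs
  have hcomp : Measurable fun θ : EuclideanSpace ℝ (Fin d) =>
      (θ, coneRadius Y θ) := measurable_id.prodMk (measurable_coneRadius Y)
  exact (hG.comp hcomp).ennreal_toReal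


def phi (x : ℝ) : ℝ := (2 * π) ^ (-(1:ℝ)/2) * Real.exp (-x^2/2)

lemma phi_pos (x : ℝ) : 0 < phi x :=
  mul_pos (rpow_pos_of_pos two_pi_pos _) (exp_pos _)

lemma abs_phi (x : ℝ) : |phi x| = phi x := abs_of_pos (phi_pos x)

lemma continuous_phi : Continuous phi := by
  unfold phi; fun_prop

lemma phi_eq (x : ℝ) : phi x = (2 * π) ^ (-(1:ℝ)/2) * Real.exp (-(1/2) * x^2) := by
  rw [phi]; ring_nf

lemma integrable_phi : Integrable phi := by
  have h := (integrable_exp_neg_mul_sq (show (0:ℝ) < 1/2 by norm_num)).const_mul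
    ((2 * π) ^ (-(1:ℝ)/2))
  exact h.congr (Eventually.of_forall fun x => (phi_eq x).symm)

lemma integral_phi : ∫ x : ℝ, phi x = 1 := by
  simp_rw [phi_eq]
  rw [integral_const_mul, integral_gaussian]
  have h1 : π / (1/2 : ℝ) = 2 * π := by ring
  rw [h1, sqrt_eq_rpow, ← Real.rpow_add two_pi_pos]
  norm_num

lemma hasDerivAt_neg_sq_half (s : ℝ) : HasDerivAt (fun x : ℝ => -x^2/2) (-s) s := by
  have h := ((hasDerivAt_pow 2 s).neg.div_const 2)
  refine h.congr_deriv ?_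
  simp; ring

lemma hasDerivAt_phi (s : ℝ) : HasDerivAt phi (-(s * phi s)) s := by
  have h := ((hasDerivAt_neg_sq_half s).exp).const_mul ((2 * π) ^ (-(1:ℝ)/2))
  have he : -(s * phi s) = (2 * π) ^ (-(1:ℝ)/2) * (Real.exp (-s^2/2) * -s) := by
    rw [phi]; ring
  rw [he]
  exact h

lemma integrable_abs_mul_phi : Integrable (fun s : ℝ => |s| * phi s) := by
  have h := ((integrable_mul_exp_neg_mul_sq (show (0:ℝ) < 1/2 by norm_num)).abs).const_mul
    ((2 * π) ^ (-(1:ℝ)/2))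
  refine h.congr (Eventually.of_forall fun x => ?_)
  show (2 * π) ^ (-(1:ℝ)/2) * |x * Real.exp (-(1/2) * x^2)| = |x| * phi x
  rw [abs_mul, abs_of_pos (exp_pos _), phi_eq]
  ring

lemma integral_abs_mul_phi_le : ∫ s : ℝ, |s| * phi s ≤ 1 := by
  have key : ∫ s : ℝ, |s| * phi s
      = (2 * π) ^ (-(1:ℝ)/2) * ∫ s : ℝ, |s| * Real.exp (-s^2/2) := by
    rw [← integral_const_mul]
    congr 1
    funext s
    rw [phi]; ring
  have habs : ∫ s : ℝ, |s| * Real.exp (-s^2/2)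
      = 2 * ∫ s in Ioi (0:ℝ), s * Real.exp (-s^2/2) := by
    rw [← integral_comp_abs (f := fun u => u * Real.exp (-u^2/2))]
    congr 1
    funext s
    rw [sq_abs]
  have hIoi : ∫ s in Ioi (0:ℝ), s * Real.exp (-s^2/2) = 1 := by
    have hderiv : ∀ x ∈ Ici (0:ℝ), HasDerivAt (fun u : ℝ => -Real.exp (-u^2/2))
        (x * Real.exp (-x^2/2)) x := by
      intro x _
      have h := ((hasDerivAt_neg_sq_half x).exp).neg
      have he : x * Real.exp (-x^2/2) = -(Real.exp (-x^2/2) * -x) := by ring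
      rw [he]
      exact h
    have hint : IntegrableOn (fun u : ℝ => u * Real.exp (-u^2/2)) (Ioi 0) := by
      have h := integrable_mul_exp_neg_mul_sq (show (0:ℝ) < 1/2 by norm_num)
      refine (h.congr (Eventually.of_forall fun x => ?_)).integrableOn
      show x * Real.exp (-(1/2) * x^2) = x * Real.exp (-x^2/2)
      congr 1; ring_nf
    have htend : Tendsto (fun u : ℝ => -Real.exp (-u^2/2)) atTop (𝓝 0) := by
      have h2 : Tendsto (fun u : ℝ => u^2/2) atTop atTop :=
        (tendsto_pow_atTop (two_ne_zero)).atTop_div_const (by norm_num)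
      have h1 : Tendsto (fun u : ℝ => -u^2/2) atTop atBot := by
        have := tendsto_neg_atTop_atBot.comp h2
        refine this.congr fun u => ?_
        show -(u^2/2) = -u^2/2
        ring
      have h3 := (Real.tendsto_exp_atBot).comp h1
      have h4 := h3.neg
      rwa [neg_zero] at h4
    have := integral_Ioi_of_hasDerivAt_of_tendsto' hderiv hint htend
    rw [this]
    norm_num
  rw [key, habs, hIoi, mul_one]
  have h2 : (2:ℝ) ≤ (2 * π) ^ ((1:ℝ)/2) := by
    rw [← Real.sqrt_eq_rpow]
    have h4 : (2:ℝ) = Real.sqrt 4 := by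
      rw [show (4:ℝ) = 2^2 by norm_num, Real.sqrt_sq (by norm_num : (0:ℝ) ≤ 2)]
    rw [h4]
    apply Real.sqrt_le_sqrt
    nlinarith [pi_gt_three]
  calc (2 * π) ^ (-(1:ℝ)/2) * 2 ≤ (2 * π) ^ (-(1:ℝ)/2) * ((2 * π) ^ ((1:ℝ)/2)) :=
        mul_le_mul_of_nonneg_left h2 (le_of_lt (rpow_pos_of_pos two_pi_pos _))
    _ = 1 := by rw [← Real.rpow_add two_pi_pos]; norm_num

lemma oneD_core {t : ℝ} (ht : 0 ≤ t) : ∫ x : ℝ, |phi (x + t) - phi x| ≤ t := by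
  -- pointwise FTC bound
  have habs : ∀ x : ℝ, |phi (x + t) - phi x| ≤ ∫ s in Ioc x (x + t), |s| * phi s := by
    intro x
    have hle : x ≤ x + t := le_add_of_nonneg_right ht
    have hcont : Continuous fun s : ℝ => -(s * phi s) :=
      (continuous_id.mul continuous_phi).neg
    have hftc : ∫ s in x..(x + t), -(s * phi s) = phi (x + t) - phi x :=
      intervalIntegral.integral_eq_sub_of_hasDerivAt (fun s _ => hasDerivAt_phi s)
        (hcont.intervalIntegrable _ _)
    rw [← hftc]
    calc |∫ s in x..(x + t), -(s * phi s)|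
        ≤ ∫ s in x..(x + t), |(-(s * phi s))| :=
          intervalIntegral.abs_integral_le_integral_abs hle
      _ = ∫ s in Ioc x (x + t), |s| * phi s := by
          rw [intervalIntegral.integral_of_le hle]
          apply setIntegral_congr_fun measurableSet_Ioc
          intro s _
          show |(-(s * phi s))| = |s| * phi s
          rw [abs_neg, abs_mul, abs_phi]
  have hmeas1 : Measurable fun x : ℝ => |phi (x + t) - phi x| :=
    (((continuous_phi.comp (continuous_id.add continuous_const)).sub continuous_phi).abs).measurable
  have heq : ∫ x : ℝ, |phi (x + t) - phi x|
      = (∫⁻ x : ℝ, ENNReal.ofReal (|phi (x + t) - phi x|)).toReal :=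
    integral_eq_lintegral_of_nonneg_ae (Eventually.of_forall fun x => abs_nonneg _)
      hmeas1.aestronglyMeasurable
  suffices hL : (∫⁻ x : ℝ, ENNReal.ofReal (|phi (x + t) - phi x|)) ≤ ENNReal.ofReal t by
    rw [heq]
    exact ENNReal.toReal_le_of_le_ofReal ht hL
  set S : Set (ℝ × ℝ) := {p : ℝ × ℝ | p.2 ∈ Ioc p.1 (p.1 + t)} with hS
  have hSmeas : MeasurableSet S := by
    have : S = {p : ℝ × ℝ | p.1 < p.2} ∩ {p : ℝ × ℝ | p.2 ≤ p.1 + t} := by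
      ext p; simp [hS, Set.mem_Ioc]
    rw [this]
    exact (measurableSet_lt measurable_fst measurable_snd).inter
      (measurableSet_le measurable_snd (measurable_fst.add_const t))
  set k : ℝ × ℝ → ℝ≥0∞ := S.indicator fun p => ENNReal.ofReal (|p.2| * phi p.2) with hk
  have hkmeas : Measurable k := by
    refine Measurable.indicator ?_ hSmeas
    exact ((measurable_snd.abs.mul (continuous_phi.measurable.comp measurable_snd)).ennreal_ofReal)
  have hnn : 0 ≤ᵐ[volume] fun s : ℝ => |s| * phi s :=
    Eventually.of_forall fun s => mul_nonneg (abs_nonneg _) (phi_pos s).le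
  calc (∫⁻ x : ℝ, ENNReal.ofReal (|phi (x + t) - phi x|))
      ≤ ∫⁻ x : ℝ, ∫⁻ s in Ioc x (x + t), ENNReal.ofReal (|s| * phi s) := by
        refine lintegral_mono fun x => ?_
        calc ENNReal.ofReal (|phi (x + t) - phi x|)
            ≤ ENNReal.ofReal (∫ s in Ioc x (x + t), |s| * phi s) :=
              ENNReal.ofReal_le_ofReal (habs x)
          _ = ∫⁻ s in Ioc x (x + t), ENNReal.ofReal (|s| * phi s) :=
              ofReal_integral_eq_lintegral_ofReal integrable_abs_mul_phi.integrableOn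
                (ae_restrict_of_ae hnn)
    _ = ∫⁻ x : ℝ, ∫⁻ s : ℝ, k (x, s) := by
        refine lintegral_congr fun x => ?_
        rw [← lintegral_indicator measurableSet_Ioc]
        refine lintegral_congr fun s => ?_
        rw [hk]
        by_cases h : s ∈ Ioc x (x + t)
        · rw [Set.indicator_of_mem h, Set.indicator_of_mem (by exact h)]
        · rw [Set.indicator_of_notMem h, Set.indicator_of_notMem (by exact h)]
    _ = ∫⁻ s : ℝ, ∫⁻ x : ℝ, k (x, s) := lintegral_lintegral_swap hkmeas.aemeasurable
    _ = ∫⁻ s : ℝ, ENNReal.ofReal (|s| * phi s) * ENNReal.ofReal t := by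
        refine lintegral_congr fun s => ?_
        have hset : ∀ x : ℝ, k (x, s) =
            (Ico (s - t) s).indicator (fun _ => ENNReal.ofReal (|s| * phi s)) x := by
          intro x
          have hiff : (x, s) ∈ S ↔ x ∈ Ico (s - t) s := by
            simp only [hS, Set.mem_setOf_eq, Set.mem_Ioc, Set.mem_Ico]
            constructor
            · rintro ⟨h1, h2⟩; exact ⟨by linarith, h1⟩
            · rintro ⟨h1, h2⟩; exact ⟨h2, by linarith⟩
          rw [hk]
          by_cases h : (x, s) ∈ S
          · rw [Set.indicator_of_mem h, Set.indicator_of_mem (hiff.1 h)]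
          · rw [Set.indicator_of_notMem h, Set.indicator_of_notMem (fun hc => h (hiff.2 hc))]
        calc ∫⁻ x : ℝ, k (x, s)
            = ∫⁻ x : ℝ, (Ico (s - t) s).indicator
                (fun _ => ENNReal.ofReal (|s| * phi s)) x := lintegral_congr hset
          _ = ∫⁻ _ in Ico (s - t) s, ENNReal.ofReal (|s| * phi s) :=
              lintegral_indicator measurableSet_Ico _
          _ = ENNReal.ofReal (|s| * phi s) * volume (Ico (s - t) s) := setLIntegral_const _ _
          _ = ENNReal.ofReal (|s| * phi s) * ENNReal.ofReal t := by
              rw [Real.volume_Ico, sub_sub_cancel]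
    _ = (∫⁻ s : ℝ, ENNReal.ofReal (|s| * phi s)) * ENNReal.ofReal t :=
        lintegral_mul_const _ ((measurable_abs.mul continuous_phi.measurable).ennreal_ofReal)
    _ ≤ ENNReal.ofReal 1 * ENNReal.ofReal t := by
        refine mul_le_mul_left ?_ _
        rw [← ofReal_integral_eq_lintegral_ofReal integrable_abs_mul_phi hnn]
        exact ENNReal.ofReal_le_ofReal integral_abs_mul_phi_le
    _ = ENNReal.ofReal t := by rw [ENNReal.ofReal_one, one_mul]

lemma oneD (t : ℝ) : ∫ x : ℝ, |phi (x + t) - phi x| ≤ |t| := by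
  rcases le_or_gt 0 t with ht | ht
  · rw [abs_of_nonneg ht]; exact oneD_core ht
  · have hsymm : ∫ x : ℝ, |phi (x + t) - phi x| = ∫ x : ℝ, |phi (x + (-t)) - phi x| := by
      have := integral_add_right_eq_self (μ := (volume : Measure ℝ))
        (fun x => |phi (x + t) - phi x|) (-t)
      rw [← this]
      congr 1
      funext x
      rw [show x + -t + t = x by ring, abs_sub_comm, show x + -t = x + (-t) by ring]
    rw [hsymm, abs_of_neg ht]
    exact oneD_core (by linarith)

variable {d : ℕ}

def Gp (d : ℕ) (x : Fin d → ℝ) : ℝ := ∏ i, phi (x i)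

lemma Gp_pos (x : Fin d → ℝ) : 0 < Gp d x :=
  Finset.prod_pos fun i _ => phi_pos (x i)

lemma integrable_Gp : Integrable (Gp d) :=
  Integrable.fintype_prod (f := fun _ : Fin d => phi) fun _ => integrable_phi

lemma measurable_Gp : Measurable (Gp d) := by
  unfold Gp
  exact Finset.measurable_prod _ fun i _ => continuous_phi.measurable.comp (measurable_pi_apply i)

lemma integrable_Gp_shift (v : Fin d → ℝ) : Integrable (fun x => Gp d (x + v)) := by
  have h := (measurePreserving_add_right (volume : Measure (Fin d → ℝ)) v).integrable_comp_emb
    (MeasurableEquiv.addRight v).measurableEmbedding (g := Gp d)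
  exact h.mpr integrable_Gp

lemma coord_bound (i : Fin d) (t : ℝ) :
    ∫ x : Fin d → ℝ, |Gp d (x + Pi.single i t) - Gp d x| ≤ |t| := by
  -- rewrite the integrand as a product over coordinates
  set h : Fin d → ℝ → ℝ := fun j => if j = i then (fun u => |phi (u + t) - phi u|) else phi
    with hh
  have hfun : ∀ x : Fin d → ℝ, |Gp d (x + Pi.single i t) - Gp d x| = ∏ j, h j (x j) := by
    intro x
    have h1 : Gp d (x + Pi.single i t)
        = phi (x i + t) * ∏ j ∈ Finset.univ.erase i, phi (x j) := by
      rw [Gp, ← Finset.mul_prod_erase Finset.univ _ (Finset.mem_univ i)]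
      congr 1
      · congr 1; simp
      · apply Finset.prod_congr rfl
        intro j hj
        have : (Pi.single i t : Fin d → ℝ) j = 0 := by
          rw [Pi.single_apply]
          simp [Finset.ne_of_mem_erase hj]
        simp [this]
    have h2 : Gp d x = phi (x i) * ∏ j ∈ Finset.univ.erase i, phi (x j) := by
      rw [Gp, ← Finset.mul_prod_erase Finset.univ _ (Finset.mem_univ i)]
    have h3 : ∏ j, h j (x j) = |phi (x i + t) - phi (x i)| *
        ∏ j ∈ Finset.univ.erase i, phi (x j) := by
      rw [← Finset.mul_prod_erase Finset.univ (fun j => h j (x j)) (Finset.mem_univ i)]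
      congr 1
      · rw [hh]; simp
      · apply Finset.prod_congr rfl
        intro j hj
        rw [hh]
        simp [Finset.ne_of_mem_erase hj]
    rw [h1, h2, h3, ← sub_mul, abs_mul]
    congr 1
    rw [abs_of_nonneg]
    exact Finset.prod_nonneg fun j _ => (phi_pos (x j)).le
  calc ∫ x : Fin d → ℝ, |Gp d (x + Pi.single i t) - Gp d x|
      = ∫ x : Fin d → ℝ, ∏ j, h j (x j) := by
        congr 1; funext x; exact hfun x
    _ = ∏ j, ∫ u : ℝ, h j u := integral_fintype_prod_eq_prod (ι := Fin d) h
    _ = (∫ u : ℝ, |phi (u + t) - phi u|) * ∏ j ∈ Finset.univ.erase i, ∫ u : ℝ, h j u := by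
        rw [← Finset.mul_prod_erase Finset.univ (fun j => ∫ u, h j u) (Finset.mem_univ i)]
        congr 1
        rw [hh]; simp
    _ = (∫ u : ℝ, |phi (u + t) - phi u|) * ∏ j ∈ Finset.univ.erase i, (1:ℝ) := by
        congr 1
        apply Finset.prod_congr rfl
        intro j hj
        rw [hh]
        simp only [Finset.ne_of_mem_erase hj, if_false]
        exact integral_phi
    _ ≤ |t| := by
        rw [Finset.prod_const_one, mul_one]
        exact oneD t

lemma telescope_bound (b : Fin d → ℝ) :
    ∫ x : Fin d → ℝ, |Gp d (x + b) - Gp d x| ≤ ∑ i, |b i| := by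
  classical
  set b' : ℕ → ℝ := fun k => if h : k < d then b ⟨k, h⟩ else 0 with hb'
  set c : ℕ → Fin d → ℝ := fun k j => if (j : ℕ) < k then b j else 0 with hc
  have hc0 : c 0 = 0 := by
    funext j; simp [hc]
  have hcd : c d = b := by
    funext j; simp [hc, j.isLt]
  have hstep : ∀ k, (hk : k < d) → c (k + 1) = c k + Pi.single (⟨k, hk⟩ : Fin d) (b' k) := by
    intro k hk
    funext j
    simp only [Pi.add_apply, Pi.single_apply]
    by_cases hj : j = (⟨k, hk⟩ : Fin d)
    · subst hj
      simp [hc, hb', hk]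
    · have hjk : (j : ℕ) ≠ k := fun h => hj (Fin.ext h)
      have hiff : ((j : ℕ) < k + 1) ↔ ((j : ℕ) < k) := by omega
      simp only [hc, hiff]
      simp [if_neg hj]
  have intk : ∀ k, Integrable (fun x : Fin d → ℝ => |Gp d (x + c (k+1)) - Gp d (x + c k)|) :=
    fun k => ((integrable_Gp_shift (c (k+1))).sub (integrable_Gp_shift (c k))).abs
  have pointwise : ∀ x : Fin d → ℝ, |Gp d (x + b) - Gp d x|
      ≤ ∑ k ∈ Finset.range d, |Gp d (x + c (k+1)) - Gp d (x + c k)| := by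
    intro x
    have hsum := Finset.sum_range_sub (f := fun k => Gp d (x + c k)) d
    have h1 : Gp d (x + b) - Gp d x
        = ∑ k ∈ Finset.range d, (Gp d (x + c (k+1)) - Gp d (x + c k)) := by
      rw [hsum, hcd, hc0, add_zero]
    rw [h1]
    exact Finset.abs_sum_le_sum_abs _ _
  have termbound : ∀ k, k < d →
      ∫ x : Fin d → ℝ, |Gp d (x + c (k+1)) - Gp d (x + c k)| ≤ |b' k| := by
    intro k hk
    have h1 : ∫ x : Fin d → ℝ, |Gp d (x + c (k+1)) - Gp d (x + c k)|
        = ∫ x : Fin d → ℝ, |Gp d ((x + c k) + Pi.single (⟨k, hk⟩ : Fin d) (b' k))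
            - Gp d (x + c k)| := by
      congr 1
      funext x
      rw [hstep k hk, ← add_assoc]
    have h2 := integral_add_right_eq_self (μ := (volume : Measure (Fin d → ℝ)))
      (fun x => |Gp d (x + Pi.single (⟨k, hk⟩ : Fin d) (b' k)) - Gp d x|) (c k)
    rw [h1, h2]
    exact coord_bound _ _
  calc ∫ x : Fin d → ℝ, |Gp d (x + b) - Gp d x|
      ≤ ∫ x : Fin d → ℝ, ∑ k ∈ Finset.range d, |Gp d (x + c (k+1)) - Gp d (x + c k)| := by
        refine integral_mono (((integrable_Gp_shift b).sub integrable_Gp).abs) ?_ pointwise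
        exact integrable_finset_sum _ fun k _ => intk k
    _ = ∑ k ∈ Finset.range d, ∫ x : Fin d → ℝ, |Gp d (x + c (k+1)) - Gp d (x + c k)| :=
        integral_finset_sum _ fun k _ => intk k
    _ ≤ ∑ k ∈ Finset.range d, |b' k| :=
        Finset.sum_le_sum fun k hk => termbound k (Finset.mem_range.1 hk)
    _ = ∑ i : Fin d, |b i| := by
        rw [← Fin.sum_univ_eq_sum_range (fun k => |b' k|) d]
        apply Finset.sum_congr rfl
        intro i _
        rw [hb']
        simp [i.isLt]

lemma gauss_eq_prod (v : EuclideanSpace ℝ (Fin d)) :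
    gaussDensity d 1 v = ∏ i, phi (v i) := by
  have hnorm : ‖v‖ ^ 2 = ∑ i, (v i) ^ 2 := by
    rw [EuclideanSpace.norm_eq, sq_sqrt (Finset.sum_nonneg fun i _ => sq_nonneg _)]
    apply Finset.sum_congr rfl
    intro i _
    rw [Real.norm_eq_abs, sq_abs]
  have hC : ((2 * π) ^ (-(1:ℝ)/2)) ^ (d : ℕ) = (2 * π) ^ (-(d:ℝ)/2) := by
    rw [← Real.rpow_natCast ((2 * π) ^ (-(1:ℝ)/2)) d, ← Real.rpow_mul two_pi_pos.le]
    congr 1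
    ring
  rw [gaussDensity, hnorm]
  simp only [one_pow, mul_one]
  have hexp : Real.exp (-(∑ i, (v i) ^ 2) / 2) = ∏ i, Real.exp (-(v i) ^ 2 / 2) := by
    rw [← Real.exp_sum]
    congr 1
    rw [← Finset.sum_div, ← Finset.sum_neg_distrib]
  rw [hexp]
  unfold phi
  rw [Finset.prod_mul_distrib, Finset.prod_const, Finset.card_univ, Fintype.card_fin, hC]

lemma sum_abs_le_sqrt_mul_norm (a : EuclideanSpace ℝ (Fin d)) :
    ∑ i, |a i| ≤ Real.sqrt d * ‖a‖ := by
  have hnorm : ‖a‖ = Real.sqrt (∑ i, (a i) ^ 2) := by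
    rw [EuclideanSpace.norm_eq]
    congr 1
    apply Finset.sum_congr rfl
    intro i _
    rw [Real.norm_eq_abs, sq_abs]
  have hcs : (∑ i, |a i|) ^ 2 ≤ (d : ℝ) * ∑ i, (a i) ^ 2 := by
    have h := sq_sum_le_card_mul_sum_sq (s := (Finset.univ : Finset (Fin d)))
      (f := fun i => |a i|)
    simp only [Finset.card_univ, Fintype.card_fin, sq_abs] at h
    exact h
  calc ∑ i, |a i| = Real.sqrt ((∑ i, |a i|) ^ 2) :=
        (Real.sqrt_sq (Finset.sum_nonneg fun i _ => abs_nonneg _)).symm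
    _ ≤ Real.sqrt ((d : ℝ) * ∑ i, (a i) ^ 2) := Real.sqrt_le_sqrt hcs
    _ = Real.sqrt d * ‖a‖ := by
        rw [Real.sqrt_mul (Nat.cast_nonneg d), hnorm]

lemma stepC (a : EuclideanSpace ℝ (Fin d)) :
    ∫ z : EuclideanSpace ℝ (Fin d), |gaussDensity d 1 (z + a) - gaussDensity d 1 z|
      ≤ Real.sqrt d * ‖a‖ := by
  have hmp := (EuclideanSpace.volume_preserving_symm_measurableEquiv_toLp (Fin d)).symm
  rw [← hmp.integral_comp (MeasurableEquiv.measurableEmbedding _)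
    (fun z => |gaussDensity d 1 (z + a) - gaussDensity d 1 z|)]
  have hcoord : ∀ (x : Fin d → ℝ) (i : Fin d),
      ((MeasurableEquiv.toLp 2 (Fin d → ℝ)) x) i = x i := fun x i => rfl
  have hint : ∀ x : Fin d → ℝ,
      |gaussDensity d 1 ((MeasurableEquiv.toLp 2 (Fin d → ℝ)) x + a)
        - gaussDensity d 1 ((MeasurableEquiv.toLp 2 (Fin d → ℝ)) x)|
      = |Gp d (x + fun i => a i) - Gp d x| := by
    intro x
    rw [gauss_eq_prod, gauss_eq_prod]
    rfl
  calc ∫ x : Fin d → ℝ, |gaussDensity d 1 ((MeasurableEquiv.toLp 2 (Fin d → ℝ)) x + a)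
        - gaussDensity d 1 ((MeasurableEquiv.toLp 2 (Fin d → ℝ)) x)|
      = ∫ x : Fin d → ℝ, |Gp d (x + fun i => a i) - Gp d x| := by
        congr 1; funext x; exact hint x
    _ ≤ ∑ i, |a i| := telescope_bound _
    _ ≤ Real.sqrt d * ‖a‖ := sum_abs_le_sqrt_mul_norm a



lemma gauss_nonneg (v : EuclideanSpace ℝ (Fin d)) : 0 ≤ gaussDensity d 1 v := by
  rw [gauss_eq_prod]
  exact Finset.prod_nonneg fun i _ => (phi_pos _).le

lemma continuous_gauss : Continuous (gaussDensity d 1) := by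
  unfold gaussDensity
  fun_prop

lemma integrable_gauss : Integrable (gaussDensity d 1) := by
  have h := (((EuclideanSpace.volume_preserving_symm_measurableEquiv_toLp (Fin d)).symm
    (MeasurableEquiv.toLp 2 (Fin d → ℝ)).symm).integrable_comp_emb
    (MeasurableEquiv.measurableEmbedding _) (g := gaussDensity d 1))
  apply h.mp
  have : (gaussDensity d 1 ∘ (MeasurableEquiv.toLp 2 (Fin d → ℝ)).symm.symm) = Gp d := by
    funext x
    rw [Function.comp_apply, gauss_eq_prod]
    rfl
  rw [this]
  exact integrable_Gp

lemma integrable_gauss_shift (a : EuclideanSpace ℝ (Fin d)) :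
    Integrable (fun z => gaussDensity d 1 (z + a)) := by
  have h := (measurePreserving_add_right (volume : Measure (EuclideanSpace ℝ (Fin d)))
    a).integrable_comp_emb (MeasurableEquiv.addRight a).measurableEmbedding
    (g := gaussDensity d 1)
  exact h.mpr integrable_gauss

/-- If `w ↦ ψ_w(x)` is `L_W`-Lipschitz on `W`, then for every `λ > 0` and `y ∈ Y` the map
`w ↦ p_λ(y|ψ_w(x)) = E_Z[p_0(y|ψ_w(x) + λZ)]`, with `Z` standard Gaussian, is
`L_W·√d/λ`-Lipschitz on `W`. -/
theorem statement4 {d p : ℕ} (hd : 1 ≤ d) (Y : Finset (EuclideanSpace ℝ (Fin d)))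
    (hY : Y.Nonempty) (W : Set (EuclideanSpace ℝ (Fin p)))
    (ψ : EuclideanSpace ℝ (Fin p) → EuclideanSpace ℝ (Fin d))
    (LW : ℝ) (hψ : ∀ w ∈ W, ∀ w' ∈ W, ‖ψ w - ψ w'‖ ≤ LW * ‖w - w'‖)
    (lam : ℝ) (hlam : 0 < lam) (y : EuclideanSpace ℝ (Fin d)) (hy : y ∈ Y) :
    ∀ w ∈ W, ∀ w' ∈ W,
      |(∫ z, p0 Y y (ψ w + lam • z) ∂(gaussMeasure d 1)) -
          (∫ z, p0 Y y (ψ w' + lam • z) ∂(gaussMeasure d 1))| ≤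
        LW * Real.sqrt d / lam * ‖w - w'‖ := by
  intro w hw w' hw'
  have hlamne : lam ≠ 0 := ne_of_gt hlam
  set a : EuclideanSpace ℝ (Fin d) := lam⁻¹ • (ψ w' - ψ w) with ha
  -- measurability and bounds for the p0 part
  have hFmeas : ∀ θ : EuclideanSpace ℝ (Fin d),
      Measurable fun z : EuclideanSpace ℝ (Fin d) => p0 Y y (θ + lam • z) := by
    intro θ
    exact (measurable_p0 Y y).comp (measurable_const.add (measurable_id.const_smul lam))
  have hFbd : ∀ θ z : EuclideanSpace ℝ (Fin d), ‖p0 Y y (θ + lam • z)‖ ≤ 1 := by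
    intro θ z
    rw [Real.norm_eq_abs, abs_of_nonneg (p0_nonneg Y y _)]
    exact p0_le_one Y y _
  -- Step A : write the Gaussian integrals as Lebesgue integrals against the density
  have hA : ∀ θ : EuclideanSpace ℝ (Fin d),
      ∫ z, p0 Y y (θ + lam • z) ∂(gaussMeasure d 1)
        = ∫ z, gaussDensity d 1 z * p0 Y y (θ + lam • z) := by
    intro θ
    rw [gaussMeasure]
    have hid : (fun v => ENNReal.ofReal (gaussDensity d 1 v))
        = fun v => (((gaussDensity d 1 v).toNNReal : ℝ≥0) : ℝ≥0∞) := rfl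
    rw [hid, integral_withDensity_eq_integral_smul
      (continuous_gauss.measurable.real_toNNReal)]
    congr 1
    funext z
    rw [NNReal.smul_def, Real.coe_toNNReal _ (gauss_nonneg z), smul_eq_mul]
  -- integrability of the two products
  have hint1 : Integrable (fun z => gaussDensity d 1 z * p0 Y y (ψ w' + lam • z)) := by
    have h := Integrable.bdd_mul integrable_gauss
      ((hFmeas (ψ w')).aestronglyMeasurable) (Filter.Eventually.of_forall (hFbd (ψ w')))
    exact h.congr (Filter.Eventually.of_forall fun z => mul_comm _ _)
  have hint2 : Integrable (fun z => gaussDensity d 1 (z + a) * p0 Y y (ψ w' + lam • z)) := by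
    have h := Integrable.bdd_mul (integrable_gauss_shift a)
      ((hFmeas (ψ w')).aestronglyMeasurable) (Filter.Eventually.of_forall (hFbd (ψ w')))
    exact h.congr (Filter.Eventually.of_forall fun z => mul_comm _ _)
  -- Step B : translation change of variables
  have hB : ∫ z, gaussDensity d 1 z * p0 Y y (ψ w + lam • z)
      = ∫ z, gaussDensity d 1 (z + a) * p0 Y y (ψ w' + lam • z) := by
    have h := integral_add_right_eq_self (μ := (volume : Measure (EuclideanSpace ℝ (Fin d))))
      (fun z => gaussDensity d 1 z * p0 Y y (ψ w + lam • z)) a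
    rw [← h]
    congr 1
    funext z
    have hpt : ψ w + lam • (z + a) = ψ w' + lam • z := by
      rw [smul_add, ha, smul_inv_smul₀ hlamne]
      abel
    rw [hpt]
  rw [hA (ψ w), hA (ψ w'), hB, ← integral_sub hint2 hint1]
  have key : |∫ z, (gaussDensity d 1 (z + a) * p0 Y y (ψ w' + lam • z)
        - gaussDensity d 1 z * p0 Y y (ψ w' + lam • z))|
      ≤ ∫ z, |gaussDensity d 1 (z + a) - gaussDensity d 1 z| := by
    have habs : |∫ z, (gaussDensity d 1 (z + a) * p0 Y y (ψ w' + lam • z)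
          - gaussDensity d 1 z * p0 Y y (ψ w' + lam • z))|
        ≤ ∫ z, |gaussDensity d 1 (z + a) * p0 Y y (ψ w' + lam • z)
          - gaussDensity d 1 z * p0 Y y (ψ w' + lam • z)| := by
      have h := norm_integral_le_integral_norm
        (f := fun z => gaussDensity d 1 (z + a) * p0 Y y (ψ w' + lam • z)
          - gaussDensity d 1 z * p0 Y y (ψ w' + lam • z)) (μ := volume)
      simpa [Real.norm_eq_abs] using h
    refine habs.trans (integral_mono ((hint2.sub hint1).abs)
      (((integrable_gauss_shift a).sub integrable_gauss).abs) fun z => ?_)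
    have h1 : gaussDensity d 1 (z + a) * p0 Y y (ψ w' + lam • z)
        - gaussDensity d 1 z * p0 Y y (ψ w' + lam • z)
        = (gaussDensity d 1 (z + a) - gaussDensity d 1 z) * p0 Y y (ψ w' + lam • z) := by
      ring
    rw [h1, abs_mul]
    calc |gaussDensity d 1 (z + a) - gaussDensity d 1 z| * |p0 Y y (ψ w' + lam • z)|
        ≤ |gaussDensity d 1 (z + a) - gaussDensity d 1 z| * 1 := by
          refine mul_le_mul_of_nonneg_left ?_ (abs_nonneg _)
          rw [abs_of_nonneg (p0_nonneg Y y _)]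
          exact p0_le_one Y y _
      _ = |gaussDensity d 1 (z + a) - gaussDensity d 1 z| := mul_one _
  refine key.trans ((stepC a).trans ?_)
  -- final arithmetic
  have hna : ‖a‖ = ‖ψ w' - ψ w‖ / lam := by
    rw [ha, norm_smul, Real.norm_eq_abs, abs_of_pos (inv_pos.2 hlam)]
    rw [div_eq_inv_mul]
  have hψ' : ‖ψ w' - ψ w‖ ≤ LW * ‖w - w'‖ := by
    have h := hψ w' hw' w hw
    rwa [norm_sub_rev (w') w] at h
  rw [hna]
  have hsd : (0:ℝ) ≤ Real.sqrt d := Real.sqrt_nonneg _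
  calc Real.sqrt d * (‖ψ w' - ψ w‖ / lam)
      ≤ Real.sqrt d * ((LW * ‖w - w'‖) / lam) := by
        gcongr
    _ = LW * Real.sqrt d / lam * ‖w - w'‖ := by ring
end
end

section
/- Let ε₀ > 0. Assume that for every x ∈ 𝒳 the map w ∈ W ↦ ψ_w(x) ∈ ℝ^d is Lipschitz continuous with a constant L_W independent of x, and that f⁰ is bounded and measurable. Then the regularized risk map w ∈ W ↦ R_{ε₀}(w) := E_{X,Z}[Σ_{y∈Y} p_0(y | ψ_w(X) + ε₀·Z) · f⁰(y, X)] is continuous on W. -/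
open MeasureTheory Metric Real
open scoped RealInnerProductSpace NNReal ENNReal

noncomputable section

namespace Statement5Aux

variable {d : ℕ} (Y : Finset (EuclideanSpace ℝ (Fin d)))

/-- The set of radii appearing in `coneRadius`. -/
def Sset (θ : EuclideanSpace ℝ (Fin d)) : Set ℝ :=
  {r : ℝ | 0 < r ∧ ∀ u ∈ closedBall (0 : EuclideanSpace ℝ (Fin d)) 1,
    ∃ y ∈ Y, θ ∈ normalCone Y y ∧ θ + r • u ∈ normalCone Y y}

lemma coneRadius_eq (θ : EuclideanSpace ℝ (Fin d)) : coneRadius Y θ = sSup (Sset Y θ) := rfl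

/-- The set `A_r` of points at which the radius condition holds with radius `r`. -/
def Aset (r : ℝ) : Set (EuclideanSpace ℝ (Fin d)) :=
  {θ | ∀ u ∈ closedBall (0 : EuclideanSpace ℝ (Fin d)) 1,
    ∃ y ∈ Y, θ ∈ normalCone Y y ∧ θ + r • u ∈ normalCone Y y}

lemma mem_Sset_iff (θ : EuclideanSpace ℝ (Fin d)) (r : ℝ) :
    r ∈ Sset Y θ ↔ 0 < r ∧ θ ∈ Aset Y r := Iff.rfl

lemma isClosed_normalCone (y : EuclideanSpace ℝ (Fin d)) : IsClosed (normalCone Y y) := by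
  have : normalCone Y y =
      ⋂ y' ∈ Y, {θ : EuclideanSpace ℝ (Fin d) | ⟪y', θ⟫ ≤ ⟪y, θ⟫} := by
    ext θ; simp [normalCone]
  rw [this]
  exact isClosed_biInter fun y' _ =>
    isClosed_le (continuous_const.inner continuous_id) (continuous_const.inner continuous_id)

lemma mem_Sset_mono {θ : EuclideanSpace ℝ (Fin d)} {r r' : ℝ} (h0 : 0 < r') (hle : r' ≤ r)
    (h : r ∈ Sset Y θ) : r' ∈ Sset Y θ := by
  obtain ⟨hr, H⟩ := h
  refine ⟨h0, fun u hu => ?_⟩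
  have hu' : (r' / r) • u ∈ closedBall (0 : EuclideanSpace ℝ (Fin d)) 1 := by
    rw [mem_closedBall_zero_iff] at hu ⊢
    rw [norm_smul]
    have h1 : |r' / r| ≤ 1 := by
      rw [abs_of_pos (div_pos h0 hr)]
      exact div_le_one_of_le₀ hle hr.le
    calc |r' / r| * ‖u‖ ≤ 1 * 1 :=
          mul_le_mul h1 hu (norm_nonneg _) zero_le_one
      _ = 1 := one_mul 1
  obtain ⟨y, hy, h1, h2⟩ := H ((r' / r) • u) hu'
  refine ⟨y, hy, h1, ?_⟩
  rwa [smul_smul, mul_comm, div_mul_cancel₀ _ hr.ne'] at h2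

lemma isClosed_Aset (r : ℝ) : IsClosed (Aset Y r) := by
  have : Aset Y r = ⋂ u ∈ closedBall (0 : EuclideanSpace ℝ (Fin d)) 1,
      ⋃ y ∈ Y, (normalCone Y y ∩ (fun θ => θ + r • u) ⁻¹' normalCone Y y) := by
    ext θ
    simp only [Aset, Set.mem_setOf_eq, Set.mem_iInter, Set.mem_iUnion, Set.mem_inter_iff,
      Set.mem_preimage, mem_closedBall_zero_iff]
    constructor <;>
      · intro h u hu
        obtain ⟨y, hy, h1, h2⟩ := h u hu
        exact ⟨y, hy, h1, h2⟩
  rw [this]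
  refine isClosed_biInter fun u _ => Y.finite_toSet.isClosed_biUnion fun y _ => ?_
  exact (isClosed_normalCone Y y).inter
    ((isClosed_normalCone Y y).preimage (continuous_id.add continuous_const))

lemma measurable_coneRadius : Measurable (coneRadius Y) := by
  apply measurable_of_Ici
  intro t
  rcases le_or_gt t 0 with ht | ht
  · have : coneRadius Y ⁻¹' Set.Ici t = Set.univ := by
      ext θ
      simp only [Set.mem_preimage, Set.mem_Ici, Set.mem_univ, iff_true]
      exact le_trans ht (Real.sSup_nonneg fun x hx => hx.1.le)
    rw [this]; exact MeasurableSet.univ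
  · have key : coneRadius Y ⁻¹' Set.Ici t =
        (⋂ n : ℕ, Aset Y ((n : ℝ) + 1))ᶜ ∩
          ⋂ q : {q : ℚ // 0 < (q : ℝ) ∧ (q : ℝ) < t}, Aset Y ((q : ℚ) : ℝ) := by
      ext θ
      simp only [Set.mem_preimage, Set.mem_Ici, Set.mem_inter_iff, Set.mem_compl_iff,
        Set.mem_iInter]
      constructor
      · intro h
        have hbdd : BddAbove (Sset Y θ) := by
          by_contra hb
          rw [coneRadius_eq, Real.sSup_of_not_bddAbove hb] at h
          linarith
        constructor
        · intro hall
          obtain ⟨M, hM⟩ := hbdd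
          obtain ⟨n, hn⟩ := exists_nat_gt M
          have hmem : ((n : ℝ) + 1) ∈ Sset Y θ := ⟨by positivity, hall n⟩
          have := hM hmem
          linarith
        · rintro ⟨q, hq0, hqt⟩
          have hne : (Sset Y θ).Nonempty := by
            by_contra hne
            rw [Set.not_nonempty_iff_eq_empty] at hne
            rw [coneRadius_eq, hne, Real.sSup_empty] at h
            linarith
          have hqlt : (q : ℝ) < sSup (Sset Y θ) := lt_of_lt_of_le hqt h
          obtain ⟨s, hs, hqs⟩ := exists_lt_of_lt_csSup hne hqlt
          exact (mem_Sset_mono Y hq0 hqs.le hs).2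
      · rintro ⟨hU, hq⟩
        have hbdd : BddAbove (Sset Y θ) := by
          by_contra hb
          apply hU
          intro n
          obtain ⟨s, hs, hlt⟩ := (not_bddAbove_iff.1 hb) ((n : ℝ) + 1)
          exact (mem_Sset_mono Y (by positivity) hlt.le hs).2
        rw [coneRadius_eq]
        by_contra hlt
        push_neg at hlt
        obtain ⟨q, hq1, hq2⟩ := exists_rat_btwn (max_lt hlt ht)
        have hq0 : 0 < (q : ℝ) := lt_of_le_of_lt (le_max_right _ _) hq1
        have hmem : ((q : ℚ) : ℝ) ∈ Sset Y θ := ⟨hq0, hq ⟨q, hq0, hq2⟩⟩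
        have := le_csSup hbdd hmem
        have : sSup (Sset Y θ) < (q : ℝ) := lt_of_le_of_lt (le_max_left _ _) hq1
        linarith [le_csSup hbdd hmem]
    rw [key]
    refine MeasurableSet.inter ?_ ?_
    · exact (MeasurableSet.iInter fun n => (isClosed_Aset Y _).measurableSet).compl
    · exact MeasurableSet.iInter fun q => (isClosed_Aset Y _).measurableSet

lemma uniformBall_le_one (s : Set (EuclideanSpace ℝ (Fin d))) : uniformBall d s ≤ 1 := by
  rw [uniformBall, Measure.smul_apply, smul_eq_mul]
  set B := closedBall (0 : EuclideanSpace ℝ (Fin d)) 1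
  calc (volume B)⁻¹ * volume.restrict B s
      ≤ (volume B)⁻¹ * volume B := by
        refine mul_le_mul_right ?_ _
        calc volume.restrict B s ≤ volume.restrict B Set.univ := measure_mono (Set.subset_univ s)
          _ = volume B := by rw [Measure.restrict_apply_univ]
    _ ≤ 1 := by
        rcases eq_or_ne (volume B) 0 with h | h
        · simp [h]
        · rcases eq_or_ne (volume B) ⊤ with h' | h'
          · simp [h']
          · rw [ENNReal.inv_mul_cancel h h']

instance : IsFiniteMeasure (uniformBall d) :=
  ⟨lt_of_le_of_lt (uniformBall_le_one _) ENNReal.one_lt_top⟩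

lemma measurable_p0 (y : EuclideanSpace ℝ (Fin d)) : Measurable (p0 Y y) := by
  have hρ := measurable_coneRadius Y
  have hm : Measurable fun q : EuclideanSpace ℝ (Fin d) × EuclideanSpace ℝ (Fin d) =>
      q.1 + coneRadius Y q.1 • q.2 :=
    measurable_fst.add ((hρ.comp measurable_fst).smul measurable_snd)
  have h := Measurable.ennreal_toReal
    (measurable_measure_prodMk_left (ν := uniformBall d)
      (hm (isClosed_normalCone Y y).measurableSet))
  have hset : ∀ θ : EuclideanSpace ℝ (Fin d),
      {u | θ + coneRadius Y θ • u ∈ normalCone Y y} =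
      Prod.mk θ ⁻¹' {q : EuclideanSpace ℝ (Fin d) × EuclideanSpace ℝ (Fin d) |
        q.1 + coneRadius Y q.1 • q.2 ∈ normalCone Y y} := fun θ => rfl
  unfold p0
  simp_rw [hset]
  exact h

lemma p0_nonneg (y θ : EuclideanSpace ℝ (Fin d)) : 0 ≤ p0 Y y θ := ENNReal.toReal_nonneg

lemma p0_le_one (y θ : EuclideanSpace ℝ (Fin d)) : p0 Y y θ ≤ 1 := by
  rw [p0]
  refine ENNReal.toReal_le_of_le_ofReal zero_le_one ?_
  simpa using uniformBall_le_one _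

lemma gaussDensity_nonneg (σ : ℝ) (v : EuclideanSpace ℝ (Fin d)) : 0 ≤ gaussDensity d σ v :=
  mul_nonneg (Real.rpow_nonneg (by positivity) _) (Real.exp_nonneg _)

lemma continuous_gaussDensity (σ : ℝ) : Continuous (gaussDensity d σ) :=
  continuous_const.mul (Real.continuous_exp.comp (((continuous_norm.pow 2)).neg.div_const _))

lemma integrable_exp_neg_mul_sq_norm {b : ℝ} (hb : 0 < b) :
    Integrable (fun v : EuclideanSpace ℝ (Fin d) => Real.exp (-b * ‖v‖ ^ 2)) := by
  have h := (GaussianFourier.integrable_cexp_neg_mul_sq_norm_add (V := EuclideanSpace ℝ (Fin d))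
    (b := (b : ℂ)) (by simpa using hb) 0 0).norm
  refine h.congr ?_
  filter_upwards with v
  rw [Complex.norm_exp]
  congr 1
  simp [← Complex.ofReal_pow]

lemma integrable_gaussDensity {σ : ℝ} (hσ : σ ≠ 0) : Integrable (gaussDensity d σ) := by
  have hform : gaussDensity d σ =
      fun v => (2 * π * σ ^ 2) ^ (-(d : ℝ) / 2) * Real.exp (-(1 / (2 * σ ^ 2)) * ‖v‖ ^ 2) := by
    ext v
    rw [gaussDensity]
    congr 1
    congr 1
    field_simp
  rw [hform]
  exact (integrable_exp_neg_mul_sq_norm (by positivity)).const_mul _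

lemma isFiniteMeasure_gaussMeasure {σ : ℝ} (hσ : σ ≠ 0) :
    IsFiniteMeasure (gaussMeasure d σ) := by
  constructor
  rw [gaussMeasure, withDensity_apply _ MeasurableSet.univ, Measure.restrict_univ]
  exact (integrable_gaussDensity hσ).lintegral_lt_top

/-- Continuity in `θ` of `θ ↦ ∫ p0(y | θ + ε₀ z) dN(0,σ²I)(z)`. -/
lemma continuous_inner_integral (y : EuclideanSpace ℝ (Fin d)) {σ ε₀ : ℝ}
    (hσ : 0 < σ) (hε : 0 < ε₀) :
    Continuous fun θ : EuclideanSpace ℝ (Fin d) =>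
      ∫ z, p0 Y y (θ + ε₀ • z) ∂(gaussMeasure d σ) := by
  set F := p0 Y y with hF
  set b := ε₀⁻¹ ^ 2 / (2 * σ ^ 2) with hbdef
  have hb : 0 < b := by positivity
  set c₀ := (2 * π * σ ^ 2) ^ (-(d : ℝ) / 2) with hc₀def
  have hc₀ : 0 ≤ c₀ := Real.rpow_nonneg (by positivity) _
  have hgform : ∀ w : EuclideanSpace ℝ (Fin d),
      gaussDensity d σ (ε₀⁻¹ • w) = c₀ * Real.exp (-b * ‖w‖ ^ 2) := by
    intro w
    have harg : -‖ε₀⁻¹ • w‖ ^ 2 / (2 * σ ^ 2) = -b * ‖w‖ ^ 2 := by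
      rw [norm_smul, Real.norm_eq_abs, mul_pow, sq_abs, hbdef]
      ring
    rw [gaussDensity, harg]
  have key : ∀ θ : EuclideanSpace ℝ (Fin d),
      (∫ z, F (θ + ε₀ • z) ∂(gaussMeasure d σ)) =
        |((ε₀ : ℝ) ^ d)⁻¹| • ∫ v, gaussDensity d σ (ε₀⁻¹ • (v - θ)) * F v := by
    intro θ
    rw [gaussMeasure]
    rw [show (fun v => ENNReal.ofReal (gaussDensity d σ v)) =
        fun v => (((gaussDensity d σ v).toNNReal : ℝ≥0) : ENNReal) from rfl]
    rw [integral_withDensity_eq_integral_smul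
      ((continuous_gaussDensity σ).measurable.real_toNNReal) _]
    have hpt : ∀ z : EuclideanSpace ℝ (Fin d),
        ((gaussDensity d σ z).toNNReal : ℝ≥0) • F (θ + ε₀ • z) =
          (fun v => gaussDensity d σ (ε₀⁻¹ • (v - θ)) * F v) (θ + ε₀ • z) := by
      intro z
      simp only [NNReal.smul_def, Real.coe_toNNReal _ (gaussDensity_nonneg σ z)]
      congr 2
      rw [add_sub_cancel_left, smul_smul, inv_mul_cancel₀ hε.ne', one_smul]
    simp_rw [hpt]
    calc (∫ z, (fun v => gaussDensity d σ (ε₀⁻¹ • (v - θ)) * F v) (θ + ε₀ • z)) =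
          |(ε₀ ^ Module.finrank ℝ (EuclideanSpace ℝ (Fin d)))⁻¹| •
            ∫ w, (fun v => gaussDensity d σ (ε₀⁻¹ • (v - θ)) * F v) (θ + w) :=
        Measure.integral_comp_smul volume (fun w => (fun v => gaussDensity d σ (ε₀⁻¹ • (v - θ)) * F v) (θ + w)) ε₀
      _ = |((ε₀ : ℝ) ^ d)⁻¹| • ∫ v, gaussDensity d σ (ε₀⁻¹ • (v - θ)) * F v := by
        rw [finrank_euclideanSpace_fin,
          integral_add_left_eq_self (fun v => gaussDensity d σ (ε₀⁻¹ • (v - θ)) * F v) θ]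
  have : (fun θ : EuclideanSpace ℝ (Fin d) => ∫ z, F (θ + ε₀ • z) ∂(gaussMeasure d σ)) =
      fun θ => |((ε₀ : ℝ) ^ d)⁻¹| • ∫ v, gaussDensity d σ (ε₀⁻¹ • (v - θ)) * F v :=
    funext key
  rw [this]
  refine Continuous.const_smul (M := ℝ)
    (g := fun θ : EuclideanSpace ℝ (Fin d) => ∫ v, gaussDensity d σ (ε₀⁻¹ • (v - θ)) * F v) ?_ _
  rw [continuous_iff_continuousAt]
  intro θ₀
  apply continuousAt_of_dominated
    (bound := fun v => c₀ * Real.exp b * Real.exp (-(b / 2) * ‖v - θ₀‖ ^ 2))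
  · filter_upwards with θ
    exact (((continuous_gaussDensity σ).comp
      (by fun_prop : Continuous fun v : EuclideanSpace ℝ (Fin d) => ε₀⁻¹ • (v - θ))).measurable.mul
      (measurable_p0 Y y)).aestronglyMeasurable
  · filter_upwards [Metric.ball_mem_nhds θ₀ one_pos] with θ hθ
    filter_upwards with v
    have hB : ‖θ - θ₀‖ ≤ 1 := by
      rw [mem_ball, dist_eq_norm] at hθ
      exact hθ.le
    have htri : ‖v - θ₀‖ ≤ ‖v - θ‖ + ‖θ - θ₀‖ := by
      calc ‖v - θ₀‖ = ‖(v - θ) + (θ - θ₀)‖ := by rw [sub_add_sub_cancel]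
        _ ≤ ‖v - θ‖ + ‖θ - θ₀‖ := norm_add_le _ _
    have hsq : ‖v - θ₀‖ ^ 2 ≤ 2 * ‖v - θ‖ ^ 2 + 2 := by
      have h2 : ‖v - θ₀‖ ^ 2 ≤ (‖v - θ‖ + ‖θ - θ₀‖) ^ 2 :=
        pow_le_pow_left₀ (norm_nonneg _) htri 2
      nlinarith [h2, sq_nonneg (‖v - θ‖ - ‖θ - θ₀‖), hB, norm_nonneg (θ - θ₀),
        mul_le_mul_of_nonneg_left hB (norm_nonneg (θ - θ₀))]
    have hexp : Real.exp (-b * ‖v - θ‖ ^ 2) ≤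
        Real.exp b * Real.exp (-(b / 2) * ‖v - θ₀‖ ^ 2) := by
      rw [← Real.exp_add]
      apply Real.exp_le_exp.2
      nlinarith
    calc ‖gaussDensity d σ (ε₀⁻¹ • (v - θ)) * F v‖
        = gaussDensity d σ (ε₀⁻¹ • (v - θ)) * |F v| := by
          rw [norm_mul, Real.norm_eq_abs, Real.norm_eq_abs,
            abs_of_nonneg (gaussDensity_nonneg σ _)]
      _ ≤ gaussDensity d σ (ε₀⁻¹ • (v - θ)) * 1 := by
          refine mul_le_mul_of_nonneg_left ?_ (gaussDensity_nonneg σ _)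
          rw [abs_of_nonneg (p0_nonneg Y y v)]
          exact p0_le_one Y y v
      _ = c₀ * Real.exp (-b * ‖v - θ‖ ^ 2) := by rw [mul_one, hgform]
      _ ≤ c₀ * (Real.exp b * Real.exp (-(b / 2) * ‖v - θ₀‖ ^ 2)) :=
          mul_le_mul_of_nonneg_left hexp hc₀
      _ = c₀ * Real.exp b * Real.exp (-(b / 2) * ‖v - θ₀‖ ^ 2) := by ring
  · exact ((integrable_exp_neg_mul_sq_norm (half_pos hb)).comp_sub_right θ₀).const_mul _
  · filter_upwards with v
    exact (((continuous_gaussDensity σ).comp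
      (by fun_prop : Continuous fun θ : EuclideanSpace ℝ (Fin d) => ε₀⁻¹ • (v - θ))).mul
      continuous_const).continuousAt

end Statement5Aux

/-- For `ε₀ > 0`, under the Lipschitz assumption on the statistical model and boundedness
of `f⁰`, the regularized risk `w ↦ R_{ε₀}(w) = E_{X,Z}[Σ_{y∈Y} p_0(y|ψ_w(X)+ε₀Z)·f⁰(y,X)]`
(with `Z ~ N(0,(1/d)·I_d)` independent of `X`) is continuous on `W`. -/
theorem statement5 {d p : ℕ} (hd : 1 ≤ d) (Y : Finset (EuclideanSpace ℝ (Fin d)))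
    (hY : Y.Nonempty)
    {𝒳 : Type*} [MeasurableSpace 𝒳] (μ : Measure 𝒳) [IsProbabilityMeasure μ]
    (W : Set (EuclideanSpace ℝ (Fin p)))
    (ψ : EuclideanSpace ℝ (Fin p) → 𝒳 → EuclideanSpace ℝ (Fin d))
    (hψmeas : ∀ w, Measurable (ψ w))
    (LW : ℝ) (hψlip : ∀ x : 𝒳, ∀ w ∈ W, ∀ w' ∈ W, ‖ψ w x - ψ w' x‖ ≤ LW * ‖w - w'‖)
    (f : EuclideanSpace ℝ (Fin d) → 𝒳 → ℝ) (hfmeas : ∀ y, Measurable (f y))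
    (Cf : ℝ) (hfbd : ∀ y x, |f y x| ≤ Cf)
    (ε₀ : ℝ) (hε : 0 < ε₀)
    (R : EuclideanSpace ℝ (Fin p) → ℝ)
    (hR : ∀ w, R w = ∫ x, ∫ z, (∑ y ∈ Y, p0 Y y (ψ w x + ε₀ • z) * f y x)
        ∂(gaussMeasure d (Real.sqrt d)⁻¹) ∂μ) :
    ContinuousOn R W := by
  classical
  set σ : ℝ := (Real.sqrt d)⁻¹ with hσdef
  have hd0 : (0 : ℝ) < d := by exact_mod_cast hd
  have hσ : 0 < σ := inv_pos.2 (Real.sqrt_pos.2 hd0)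
  haveI : IsFiniteMeasure (gaussMeasure d σ) :=
    Statement5Aux.isFiniteMeasure_gaussMeasure hσ.ne'
  set ν : Measure (EuclideanSpace ℝ (Fin d)) := gaussMeasure d σ with hνdef
  set C : ℝ := max Cf 0 with hCdef
  have hC : 0 ≤ C := le_max_right _ _
  have hfbd' : ∀ y x, |f y x| ≤ C := fun y x => le_trans (hfbd y x) (le_max_left _ _)
  set I : EuclideanSpace ℝ (Fin d) → EuclideanSpace ℝ (Fin d) → ℝ :=
    fun y θ => ∫ z, p0 Y y (θ + ε₀ • z) ∂ν with hIdef
  have hIcont : ∀ y, Continuous (I y) := fun y =>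
    Statement5Aux.continuous_inner_integral Y y hσ hε
  have hint : ∀ (y) (θ : EuclideanSpace ℝ (Fin d)),
      Integrable (fun z => p0 Y y (θ + ε₀ • z)) ν := by
    intro y θ
    have hmeas : Measurable fun z : EuclideanSpace ℝ (Fin d) => p0 Y y (θ + ε₀ • z) :=
      (Statement5Aux.measurable_p0 Y y).comp (measurable_const.add (measurable_id.const_smul ε₀))
    refine (integrable_const (1 : ℝ)).mono' hmeas.aestronglyMeasurable ?_
    filter_upwards with z
    rw [Real.norm_eq_abs, abs_of_nonneg (Statement5Aux.p0_nonneg Y y _)]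
    exact Statement5Aux.p0_le_one Y y _
  set M : ℝ := (ν Set.univ).toReal with hMdef
  have hM : 0 ≤ M := ENNReal.toReal_nonneg
  have hI_bd : ∀ y θ, |I y θ| ≤ M := by
    intro y θ
    calc |I y θ| ≤ ∫ z, |p0 Y y (θ + ε₀ • z)| ∂ν := by
          simpa [Real.norm_eq_abs] using
            norm_integral_le_integral_norm (μ := ν) fun z => p0 Y y (θ + ε₀ • z)
      _ ≤ ∫ _, (1 : ℝ) ∂ν := by
          refine integral_mono (hint y θ).abs (integrable_const 1) fun z => ?_
          rw [abs_of_nonneg (Statement5Aux.p0_nonneg Y y _)]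
          exact Statement5Aux.p0_le_one Y y _
      _ = M := by simp [hMdef, Measure.real]
  have hswap : ∀ w x, (∫ z, ∑ y ∈ Y, p0 Y y (ψ w x + ε₀ • z) * f y x ∂ν)
      = ∑ y ∈ Y, I y (ψ w x) * f y x := by
    intro w x
    rw [integral_finset_sum Y fun y _ => (hint y (ψ w x)).mul_const (f y x)]
    exact Finset.sum_congr rfl fun y _ => integral_mul_const _ _
  have hReq : ∀ w, R w = ∫ x, (∑ y ∈ Y, I y (ψ w x) * f y x) ∂μ := by
    intro w
    rw [hR w]
    exact integral_congr_ae (Filter.Eventually.of_forall fun x => hswap w x)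
  have hmain : ContinuousOn
      (fun w => ∫ x, (∑ y ∈ Y, I y (ψ w x) * f y x) ∂μ) W := by
    apply continuousOn_of_dominated (bound := fun _ => (Y.card : ℝ) * (M * C))
    · intro w _
      refine (Finset.measurable_sum Y fun y _ => ?_).aestronglyMeasurable
      exact ((hIcont y).measurable.comp (hψmeas w)).mul (hfmeas y)
    · intro w _
      filter_upwards with x
      calc ‖∑ y ∈ Y, I y (ψ w x) * f y x‖
          ≤ ∑ y ∈ Y, ‖I y (ψ w x) * f y x‖ := norm_sum_le _ _
        _ ≤ ∑ _y ∈ Y, M * C := by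
            refine Finset.sum_le_sum fun y _ => ?_
            rw [norm_mul, Real.norm_eq_abs, Real.norm_eq_abs]
            exact mul_le_mul (hI_bd y _) (hfbd' y x) (abs_nonneg _) hM
        _ = (Y.card : ℝ) * (M * C) := by
            rw [Finset.sum_const, nsmul_eq_mul]
    · exact integrable_const _
    · filter_upwards with x
      refine continuousOn_finset_sum Y fun y _ => ContinuousOn.mul ?_ continuousOn_const
      have hψc : ContinuousOn (fun w => ψ w x) W := by
        refine (LipschitzOnWith.of_dist_le_mul (K := Real.toNNReal LW)
          fun w hw w' hw' => ?_).continuousOn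
        rw [dist_eq_norm, dist_eq_norm]
        refine le_trans (hψlip x w hw w' hw') ?_
        rw [Real.coe_toNNReal']
        exact mul_le_mul_of_nonneg_right (le_max_left _ _) (norm_nonneg _)
      exact (hIcont y).comp_continuousOn hψc
  exact hmain.congr fun w _ => hReq w
end
end
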